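/- arXiv:1904.03467 — 10 statements merged into one kernel-verified Lean document; each statement's English description precedes it below -/
import Mathlib

section
/- Any two locally-dense subgraphs U and W of a graph G are comparable: either U ⊆ W or W ⊆ U. -/
open Finset

variable {V : Type*}

/-- Edges of `G` with both endpoints in `X`. -/
def innerEdges [Fintype V] [DecidableEq V] (G : SimpleGraph V) [DecidableRel G.Adj]
    (X : Finset V) : Finset (Sym2 V) :=
  G.edgeFinset.filter (fun e => ∀ v ∈ e, v ∈ X)

/-- Marginal edges `Ẽ(X,Y) = E(X) ∪ E(X,Y)` (for disjoint `X`, `Y`):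
edges with both endpoints in `X ∪ Y`, at least one in `X`. -/
def margEdges [Fintype V] [DecidableEq V] (G : SimpleGraph V) [DecidableRel G.Adj]
    (X Y : Finset V) : Finset (Sym2 V) :=
  G.edgeFinset.filter (fun e => (∀ v ∈ e, v ∈ X ∪ Y) ∧ ∃ v ∈ e, v ∈ X)

/-- Outer density `d(X,Y) = |Ẽ(X \ Y, Y)| / |X \ Y|`. -/
def outDensity [Fintype V] [DecidableEq V] (G : SimpleGraph V) [DecidableRel G.Adj]
    (X Y : Finset V) : ℚ :=
  ((margEdges G (X \ Y) Y).card : ℚ) / ((X \ Y).card : ℚ)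

/-- `W` is locally dense: there is no nonempty `X ⊆ W` and nonempty `Y` with `Y ∩ W = ∅`
such that `d(X, W \ X) ≤ d(Y, W)`. -/
def LocallyDense [Fintype V] [DecidableEq V] (G : SimpleGraph V) [DecidableRel G.Adj]
    (W : Finset V) : Prop :=
  ¬ ∃ X Y : Finset V, X.Nonempty ∧ Y.Nonempty ∧ X ⊆ W ∧ Y ∩ W = ∅ ∧
      outDensity G X (W \ X) ≤ outDensity G Y W

/-- Number of neighbors of `x` in `U`. -/
def degIn [DecidableEq V] (G : SimpleGraph V) [DecidableRel G.Adj] (x : V) (U : Finset V) : ℕ :=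
  (U.filter (G.Adj x)).card


lemma margEdges_mono [Fintype V] [DecidableEq V] (G : SimpleGraph V) [DecidableRel G.Adj]
    {X Y Y' : Finset V} (h : Y ⊆ Y') : margEdges G X Y ⊆ margEdges G X Y' := by
  intro e he
  rw [margEdges, Finset.mem_filter] at he ⊢
  obtain ⟨he0, h1, h2⟩ := he
  refine ⟨he0, fun v hv => ?_, h2⟩
  rcases Finset.mem_union.1 (h1 v hv) with h' | h'
  · exact Finset.mem_union_left _ h'
  · exact Finset.mem_union_right _ (h h')

theorem locallyDense_comparable [Fintype V] [DecidableEq V] (G : SimpleGraph V) [DecidableRel G.Adj]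
    (U W : Finset V) (hU : LocallyDense G U) (hW : LocallyDense G W) :
    U ⊆ W ∨ W ⊆ U := by
  by_contra hcon
  push_neg at hcon
  obtain ⟨hUW, hWU⟩ := hcon
  obtain ⟨a, haU, haW⟩ := Finset.not_subset.1 hUW
  obtain ⟨b, hbW, hbU⟩ := Finset.not_subset.1 hWU
  set A := U \ W with hA
  set B := W \ U with hB
  have hAne : A.Nonempty := ⟨a, Finset.mem_sdiff.2 ⟨haU, haW⟩⟩
  have hBne : B.Nonempty := ⟨b, Finset.mem_sdiff.2 ⟨hbW, hbU⟩⟩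
  have hBU : B ∩ U = ∅ := by ext x; simp [hB]; try tauto
  have hAW : A ∩ W = ∅ := by ext x; simp [hA]; try tauto
  have h1 : ¬ (outDensity G A (U \ A) ≤ outDensity G B U) :=
    fun h => hU ⟨A, B, hAne, hBne, Finset.sdiff_subset, hBU, h⟩
  have h2 : ¬ (outDensity G B (W \ B) ≤ outDensity G A W) :=
    fun h => hW ⟨B, A, hBne, hAne, Finset.sdiff_subset, hAW, h⟩
  push_neg at h1 h2
  have hUA : U \ A = U ∩ W := by ext x; simp [hA]; try tauto
  have hWB : W \ B = U ∩ W := by ext x; simp [hB]; try tauto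
  rw [hUA] at h1
  rw [hWB] at h2
  have hA1 : A \ (U ∩ W) = A := by ext x; simp [hA]; try tauto
  have hA2 : A \ W = A := by ext x; simp [hA]; try tauto
  have hB1 : B \ (U ∩ W) = B := by ext x; simp [hB]; try tauto
  have hB2 : B \ U = B := by ext x; simp [hB]; try tauto
  have m1 : outDensity G A (U ∩ W) ≤ outDensity G A W := by
    unfold outDensity
    rw [hA1, hA2]
    gcongr
    exact margEdges_mono G Finset.inter_subset_right
  have m2 : outDensity G B (U ∩ W) ≤ outDensity G B U := by
    unfold outDensity
    rw [hB1, hB2]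
    gcongr
    exact margEdges_mono G Finset.inter_subset_left
  linarith
end

section
/- The collection of all locally-dense subgraphs of a finite graph can be arranged into a strictly increasing chain B_0 ⊊ B_1 ⊊ ⋯ ⊊ B_k with k ≤ |V|, and moreover the outer densities are strictly decreasing along the chain: d(B_i, B_{i-1}) > d(B_{i+1}, B_i) for 1 ≤ i < k. -/
open Finset

variable {V : Type*}

section Aux

variable [Fintype V] [DecidableEq V] (G : SimpleGraph V) [DecidableRel G.Adj]

lemma margEdges_mono_s2 {X A B : Finset V} (h : A ⊆ B) : margEdges G X A ⊆ margEdges G X B := by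
  intro e he
  simp only [margEdges, mem_filter] at he ⊢
  refine ⟨he.1, fun v hv => ?_, he.2.2⟩
  rcases mem_union.1 (he.2.1 v hv) with h1 | h1
  · exact mem_union_left _ h1
  · exact mem_union_right _ (h h1)

lemma outDensity_mono {X A B : Finset V} (hXB : X ∩ B = ∅) (hAB : A ⊆ B) :
    outDensity G X A ≤ outDensity G X B := by
  have hdB : Disjoint X B := disjoint_iff_inter_eq_empty.2 hXB
  have hdA : Disjoint X A := hdB.mono_right hAB
  have h1 : X \ A = X := sdiff_eq_self_of_disjoint hdA
  have h2 : X \ B = X := sdiff_eq_self_of_disjoint hdB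
  unfold outDensity
  rw [h1, h2]
  rcases X.eq_empty_or_nonempty with rfl | hX
  · simp
  · have hc : (0 : ℚ) < (X.card : ℚ) := by exact_mod_cast hX.card_pos
    have hm : ((margEdges G X A).card : ℚ) ≤ ((margEdges G X B).card : ℚ) := by
      exact_mod_cast card_le_card (margEdges_mono_s2 G hAB)
    exact (div_le_div_iff_of_pos_right hc).mpr hm

lemma locallyDense_empty : LocallyDense G ∅ := by
  rintro ⟨X, Y, hX, hY, hXW, _, _⟩
  exact hX.ne_empty (subset_empty.1 hXW)

lemma locallyDense_total {W₁ W₂ : Finset V} (h1 : LocallyDense G W₁) (h2 : LocallyDense G W₂) :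
    W₁ ⊆ W₂ ∨ W₂ ⊆ W₁ := by
  by_contra hc
  push_neg at hc
  have hX : (W₁ \ W₂).Nonempty := sdiff_nonempty.2 hc.1
  have hY : (W₂ \ W₁).Nonempty := sdiff_nonempty.2 hc.2
  have k1 : ¬ outDensity G (W₁ \ W₂) (W₁ \ (W₁ \ W₂)) ≤ outDensity G (W₂ \ W₁) W₁ :=
    fun hle => h1 ⟨_, _, hX, hY, sdiff_subset, sdiff_inter_self _ _, hle⟩
  have k2 : ¬ outDensity G (W₂ \ W₁) (W₂ \ (W₂ \ W₁)) ≤ outDensity G (W₁ \ W₂) W₂ :=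
    fun hle => h2 ⟨_, _, hY, hX, sdiff_subset, sdiff_inter_self _ _, hle⟩
  have m1 : outDensity G (W₁ \ W₂) (W₁ \ (W₁ \ W₂)) ≤ outDensity G (W₁ \ W₂) W₂ := by
    apply outDensity_mono G (sdiff_inter_self _ _)
    rw [sdiff_sdiff_self_left]
    exact inter_subset_right
  have m2 : outDensity G (W₂ \ W₁) (W₂ \ (W₂ \ W₁)) ≤ outDensity G (W₂ \ W₁) W₁ := by
    apply outDensity_mono G (sdiff_inter_self _ _)
    rw [sdiff_sdiff_self_left]
    exact inter_subset_right
  push_neg at k1 k2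
  linarith

lemma outDensity_sdiff_left (C B : Finset V) : outDensity G (C \ B) B = outDensity G C B := by
  unfold outDensity
  rw [sdiff_sdiff, sup_idem]

lemma outDensity_inner {A B : Finset V} (h : A ⊆ B) :
    outDensity G (B \ A) (B \ (B \ A)) = outDensity G B A := by
  have h1 : B \ (B \ A) = A := Finset.sdiff_sdiff_eq_self h
  rw [h1]
  unfold outDensity
  rw [sdiff_sdiff, sup_idem]

end Aux

theorem locallyDense_chain [Fintype V] [DecidableEq V] (G : SimpleGraph V) [DecidableRel G.Adj]
 :
    ∃ (k : ℕ) (B : ℕ → Finset V),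
      k ≤ Fintype.card V ∧
      (∀ i j, i < j → j ≤ k → B i ⊂ B j) ∧
      (∀ W : Finset V, LocallyDense G W ↔ ∃ i ≤ k, W = B i) ∧
      (∀ i, 1 ≤ i → i < k →
        outDensity G (B (i + 1)) (B i) < outDensity G (B i) (B (i - 1))) := by
  classical
  letI : LinearOrder {W : Finset V // LocallyDense G W} :=
    { le := fun A B => A.1 ⊆ B.1
      lt := fun A B => A.1 ⊂ B.1
      le_refl := fun A => subset_rfl
      le_trans := fun A B C hab hbc => hab.trans hbc
      le_antisymm := fun A B h h' => Subtype.ext (Finset.Subset.antisymm h h')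
      le_total := fun A B => locallyDense_total G A.2 B.2
      lt_iff_le_not_ge := fun A B => Finset.ssubset_iff_subset_ne.trans
        (by
          constructor
          · rintro ⟨h1, h2⟩
            exact ⟨h1, fun h3 => h2 (Finset.Subset.antisymm h1 h3)⟩
          · rintro ⟨h1, h2⟩
            exact ⟨h1, fun h3 => h2 (by simp [h3])⟩)
      toDecidableLE := fun A B => inferInstanceAs (Decidable (A.1 ⊆ B.1)) }
  haveI : Fintype {W : Finset V // LocallyDense G W} := Fintype.ofFinite _
  set n := Fintype.card {W : Finset V // LocallyDense G W} with hn
  have hn1 : 1 ≤ n := Fintype.card_pos_iff.mpr ⟨⟨∅, locallyDense_empty G⟩⟩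
  set k := n - 1 with hk
  have hkn : ∀ i, min i k < n := fun i => by omega
  let E := monoEquivOfFin {W : Finset V // LocallyDense G W} hn.symm
  let B : ℕ → Finset V := fun i => (E ⟨min i k, hkn i⟩).1
  have hchain : ∀ i j, i < j → j ≤ k → B i ⊂ B j := by
    intro i j hij hjk
    have : (⟨min i k, hkn i⟩ : Fin n) < ⟨min j k, hkn j⟩ := by
      simp only [Fin.mk_lt_mk]
      omega
    exact E.strictMono this
  have hiff : ∀ W : Finset V, LocallyDense G W ↔ ∃ i ≤ k, W = B i := by
    intro W
    constructor
    · intro hW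
      refine ⟨(E.symm ⟨W, hW⟩).val, by omega, ?_⟩
      have : (⟨min (E.symm ⟨W, hW⟩).val k, hkn _⟩ : Fin n) = E.symm ⟨W, hW⟩ := by
        apply Fin.ext
        have := (E.symm ⟨W, hW⟩).isLt
        simp only []
        omega
      show W = (E ⟨min (E.symm ⟨W, hW⟩).val k, hkn _⟩).1
      rw [this, OrderIso.apply_symm_apply]
    · rintro ⟨i, _, rfl⟩
      exact (E ⟨min i k, hkn i⟩).2
  refine ⟨k, B, ?_, hchain, hiff, ?_⟩
  · -- k ≤ Fintype.card V
    have hcard : ∀ i, i ≤ k → i ≤ (B i).card := by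
      intro i
      induction i with
      | zero => intro _; exact Nat.zero_le _
      | succ m ih =>
        intro hm
        have h1 := hchain m (m + 1) (Nat.lt_succ_self m) hm
        have h2 := Finset.card_lt_card h1
        have := ih (by omega)
        omega
    calc k ≤ (B k).card := hcard k le_rfl
      _ ≤ (univ : Finset V).card := card_le_card (subset_univ _)
      _ = Fintype.card V := Finset.card_univ
  · -- decreasing densities
    intro i hi1 hik
    have hAB : B (i - 1) ⊂ B i := hchain (i - 1) i (by omega) (by omega)
    have hBC : B i ⊂ B (i + 1) := hchain i (i + 1) (by omega) (by omega)
    have hld : LocallyDense G (B i) := (hiff (B i)).mpr ⟨i, by omega, rfl⟩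
    by_contra hle
    push_neg at hle
    apply hld
    refine ⟨B i \ B (i - 1), B (i + 1) \ B i, sdiff_nonempty.2 (fun h => hAB.2 h),
      sdiff_nonempty.2 (fun h => hBC.2 h), sdiff_subset, sdiff_inter_self _ _, ?_⟩
    rw [outDensity_inner G hAB.1, outDensity_sdiff_left]
    exact hle
end

section
/- Let X ⊆ Y be vertex sets and Z a vertex set disjoint from Y, with Z and Y\X nonempty. If d(Z, Y) ≥ d(Y, X), then d(Y ∪ Z, X) ≥ d(Y, X). -/
open Finset

variable {V : Type*}

theorem density_add_lemma [Fintype V] [DecidableEq V] (G : SimpleGraph V) [DecidableRel G.Adj]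
    (X Y Z : Finset V) (hXY : X ⊆ Y) (hZY : Z ∩ Y = ∅)
    (hZ : Z.Nonempty) (hYX : (Y \ X).Nonempty)
    (h : outDensity G Y X ≤ outDensity G Z Y) :
    outDensity G Y X ≤ outDensity G (Y ∪ Z) X := by
  have hZYd : Disjoint Z Y := disjoint_iff_inter_eq_empty.2 hZY
  have hZX : Disjoint Z X := hZYd.mono_right hXY
  have hZsd : Z \ Y = Z := sdiff_eq_self_of_disjoint hZYd
  have hset : (Y ∪ Z) \ X = (Y \ X) ∪ Z := by
    rw [union_sdiff_distrib, sdiff_eq_self_of_disjoint hZX]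
  have hsub : margEdges G (Y \ X) X ∪ margEdges G Z Y ⊆ margEdges G ((Y \ X) ∪ Z) X := by
    intro e he
    simp only [margEdges, mem_union, mem_filter] at he ⊢
    rcases he with ⟨he, hall, v, hv, hvX⟩ | ⟨he, hall, v, hv, hvX⟩
    · exact ⟨he, fun w hw => by rcases hall w hw with h' | h' <;> simp [h'],
        v, hv, by simp [hvX]⟩
    · refine ⟨he, fun w hw => ?_, v, hv, by simp [hvX]⟩
      rcases hall w hw with h' | h'
      · simp [h']
      · by_cases hwx : w ∈ X
        · simp [hwx]
        · simp [mem_sdiff.2 ⟨h', hwx⟩]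
  have hdisj : Disjoint (margEdges G (Y \ X) X) (margEdges G Z Y) := by
    rw [Finset.disjoint_left]
    intro e h1 h2
    simp only [margEdges, mem_filter] at h1 h2
    obtain ⟨_, hall, _⟩ := h1
    obtain ⟨_, _, v, hv, hvZ⟩ := h2
    have : v ∈ Y := by
      rcases mem_union.1 (hall v hv) with h' | h'
      · exact (mem_sdiff.1 h').1
      · exact hXY h'
    exact (Finset.disjoint_left.1 hZYd hvZ) this
  have hcard : (margEdges G (Y \ X) X).card + (margEdges G Z Y).card
      ≤ (margEdges G ((Y \ X) ∪ Z) X).card := by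
    rw [← card_union_of_disjoint hdisj]
    exact card_le_card hsub
  unfold outDensity at h ⊢
  rw [hset]; rw [hZsd] at h
  have hdz : Disjoint (Y \ X) Z := (hZYd.mono_right (sdiff_subset)).symm
  have hcardu : ((Y \ X) ∪ Z).card = (Y \ X).card + Z.card := card_union_of_disjoint hdz
  have hm : (0:ℚ) < ((Y \ X).card : ℚ) := by exact_mod_cast card_pos.2 hYX
  have hn : (0:ℚ) < (Z.card : ℚ) := by exact_mod_cast card_pos.2 hZ
  have hc : ((margEdges G (Y \ X) X).card : ℚ) + ((margEdges G Z Y).card : ℚ)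
      ≤ ((margEdges G ((Y \ X) ∪ Z) X).card : ℚ) := by exact_mod_cast hcard
  rw [hcardu]
  push_cast
  rw [div_le_div_iff₀ hm (by linarith)]
  rw [div_le_div_iff₀ hm hn] at h
  nlinarith
end

section
/- Let X ⊆ Y be vertex sets and Z ⊆ Y\X a nonempty set with Z ≠ Y\X. If d(Z, Y\Z) < d(Y, X), then d(Y\Z, X) > d(Y, X). -/
open Finset

variable {V : Type*}

lemma margEdges_split [Fintype V] [DecidableEq V] (G : SimpleGraph V) [DecidableRel G.Adj]
    (X Y Z : Finset V) (hXY : X ⊆ Y) (hZ : Z ⊆ Y \ X) :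
    margEdges G (Y \ X) X = margEdges G Z (Y \ Z) ∪ margEdges G ((Y \ X) \ Z) X := by
  ext e
  induction e using Sym2.ind with
  | _ u v =>
    simp only [margEdges, mem_filter, mem_union, Sym2.mem_iff, Sym2.forall, forall_eq_or_imp,
      forall_eq, exists_eq_or_imp, exists_eq_left, mem_sdiff]
    have hu : u ∈ X → u ∈ Y := @hXY u
    have hv : v ∈ X → v ∈ Y := @hXY v
    have hu2' : u ∈ Z → u ∈ Y ∧ u ∉ X := fun h => by simpa using hZ h
    have hv2' : v ∈ Z → v ∈ Y ∧ v ∉ X := fun h => by simpa using hZ h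
    generalize (s(u,v) ∈ G.edgeFinset) = P at *
    generalize (u ∈ X) = p1 at *
    generalize (v ∈ X) = p2 at *
    generalize (u ∈ Y) = p3 at *
    generalize (v ∈ Y) = p4 at *
    generalize (u ∈ Z) = p5 at *
    generalize (v ∈ Z) = p6 at *
    by_cases P <;> by_cases p1 <;> by_cases p2 <;> by_cases p3 <;> by_cases p4 <;> by_cases p5 <;> by_cases p6 <;> simp_all

lemma margEdges_disj [Fintype V] [DecidableEq V] (G : SimpleGraph V) [DecidableRel G.Adj]
    (X Y Z : Finset V) (hXY : X ⊆ Y) (hZ : Z ⊆ Y \ X) :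
    Disjoint (margEdges G Z (Y \ Z)) (margEdges G ((Y \ X) \ Z) X) := by
  rw [Finset.disjoint_left]
  intro e h1 h2
  induction e using Sym2.ind with
  | _ u v =>
    simp only [margEdges, mem_filter, mem_union, Sym2.mem_iff, Sym2.forall, forall_eq_or_imp,
      forall_eq, exists_eq_or_imp, exists_eq_left, mem_sdiff] at h1 h2
    have hu2' : u ∈ Z → u ∈ Y ∧ u ∉ X := fun h => by simpa using hZ h
    have hv2' : v ∈ Z → v ∈ Y ∧ v ∉ X := fun h => by simpa using hZ h
    generalize (u ∈ X) = p1 at *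
    generalize (v ∈ X) = p2 at *
    generalize (u ∈ Y) = p3 at *
    generalize (v ∈ Y) = p4 at *
    generalize (u ∈ Z) = p5 at *
    generalize (v ∈ Z) = p6 at *
    by_cases p1 <;> by_cases p2 <;> by_cases p3 <;> by_cases p4 <;> by_cases p5 <;> by_cases p6 <;> simp_all

theorem density_delete_lemma [Fintype V] [DecidableEq V] (G : SimpleGraph V) [DecidableRel G.Adj]
    (X Y Z : Finset V) (hXY : X ⊆ Y) (hZ : Z ⊆ Y \ X)
    (hZne : Z.Nonempty) (hZne' : Z ≠ Y \ X)
    (h : outDensity G Z (Y \ Z) < outDensity G Y X) :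
    outDensity G Y X < outDensity G (Y \ Z) X := by
  have hZY : Z ⊆ Y := hZ.trans (sdiff_subset)
  have e1 : Z \ (Y \ Z) = Z := sdiff_eq_self_of_disjoint (sdiff_disjoint).symm
  have e2 : (Y \ Z) \ X = (Y \ X) \ Z := sdiff_right_comm Y Z X
  simp only [outDensity] at h ⊢
  rw [e1] at h
  rw [e2]
  -- cards
  set a : ℕ := (margEdges G Z (Y \ Z)).card with ha
  set c : ℕ := (margEdges G ((Y \ X) \ Z) X).card with hc
  have hsplit : (margEdges G (Y \ X) X).card = a + c := by
    rw [margEdges_split G X Y Z hXY hZ, card_union_of_disjoint (margEdges_disj G X Y Z hXY hZ)]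
  set p : ℕ := Z.card with hp
  set q : ℕ := ((Y \ X) \ Z).card with hq
  have hple : p ≤ (Y \ X).card := card_le_card hZ
  have hcard : (Y \ X).card = p + q := by
    rw [hq, card_sdiff_of_subset hZ]; omega
  have hp0 : 0 < p := card_pos.mpr hZne
  have hq0 : 0 < q := by
    rcases Nat.eq_zero_or_pos q with h0 | h0
    · exact absurd (eq_of_subset_of_card_le hZ (by omega)) hZne'
    · exact h0
  rw [hsplit, hcard] at h ⊢
  have hp0' : (0:ℚ) < p := by exact_mod_cast hp0
  have hq0' : (0:ℚ) < q := by exact_mod_cast hq0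
  have hpq0' : (0:ℚ) < ((p + q : ℕ) : ℚ) := by positivity
  rw [div_lt_div_iff₀ hp0' hpq0'] at h
  rw [div_lt_div_iff₀ hpq0' hq0']
  push_cast at h ⊢
  nlinarith [h]
end

section
/- Let {B_i}, i = 0,…,k, be the chain of all locally-dense subgraphs of G, ordered by inclusion. Then B_0 = ∅, B_k = V, and for each i ≥ 1, B_i maximizes the outer density d(W, B_{i-1}) over all W that properly contain B_{i-1}. -/
open Finset

variable {V : Type*}

section helpers
variable [Fintype V] [DecidableEq V] (G : SimpleGraph V) [DecidableRel G.Adj]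

lemma margEdges_empty_left (A : Finset V) : margEdges G ∅ A = ∅ := by
  ext e; simp [margEdges]

lemma margEdges_partition (A P Q : Finset V) (hAP : Disjoint A P) (hAQ : Disjoint A Q)
    (hPQ : Disjoint P Q) :
    (margEdges G (P ∪ Q) A).card
      = (margEdges G P A).card + (margEdges G Q (A ∪ P)).card := by
  classical
  have hdisj : Disjoint (margEdges G P A) (margEdges G Q (A ∪ P)) := by
    rw [disjoint_left]
    intro e h1 h2
    simp only [margEdges, mem_filter, mem_union] at h1 h2
    obtain ⟨-, hall1, -⟩ := h1
    obtain ⟨-, -, v, hv, hvQ⟩ := h2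
    rcases hall1 v hv with h | h
    · exact (disjoint_left.mp hPQ h) hvQ
    · exact (disjoint_left.mp hAQ h) hvQ
  have heq : margEdges G (P ∪ Q) A = margEdges G P A ∪ margEdges G Q (A ∪ P) := by
    ext e
    simp only [margEdges, mem_filter, mem_union]
    constructor
    · rintro ⟨he, hall, v, hv, hvPQ⟩
      by_cases hQ : ∃ w ∈ e, w ∈ Q
      · exact Or.inr ⟨he, fun w hw => by rcases hall w hw with (h | h) | h <;> tauto, hQ⟩
      · push_neg at hQ
        refine Or.inl ⟨he, fun w hw => ?_, v, hv, ?_⟩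
        · rcases hall w hw with (h | h) | h
          · exact Or.inl h
          · exact absurd h (hQ w hw)
          · exact Or.inr h
        · rcases hvPQ with h | h
          · exact h
          · exact absurd h (hQ v hv)
    · rintro (⟨he, hall, v, hv, hvP⟩ | ⟨he, hall, v, hv, hvQ⟩)
      · exact ⟨he, fun w hw => by rcases hall w hw with h | h <;> tauto, v, hv, Or.inl hvP⟩
      · exact ⟨he, fun w hw => by rcases hall w hw with h | (h | h) <;> tauto, v, hv, Or.inr hvQ⟩
  rw [heq, card_union_of_disjoint hdisj]

lemma margEdges_X_bound (A S X : Finset V) (hAS : Disjoint A S) (hX : X ⊆ A ∪ S) :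
    (margEdges G (X ∩ A) (A \ (X ∩ A))).card
      + ((margEdges G S A) \ (margEdges G (S \ X) A)).card
      ≤ (margEdges G X ((A ∪ S) \ X)).card := by
  classical
  have hdisj : Disjoint (margEdges G (X ∩ A) (A \ (X ∩ A)))
      ((margEdges G S A) \ (margEdges G (S \ X) A)) := by
    rw [disjoint_left]
    intro e h1 h2
    simp only [margEdges, mem_filter, mem_union, mem_sdiff, mem_inter] at h1 h2
    obtain ⟨-, hall1, -⟩ := h1
    obtain ⟨⟨-, -, v, hv, hvS⟩, -⟩ := h2
    rcases hall1 v hv with ⟨-, h⟩ | ⟨h, -⟩ <;>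
      exact (disjoint_left.mp hAS h) hvS
  rw [← card_union_of_disjoint hdisj]
  apply card_le_card
  intro e he
  simp only [margEdges, mem_filter, mem_union, mem_sdiff, mem_inter] at he ⊢
  rcases he with ⟨he, hall, v, hv, hvX, hvA⟩ | ⟨⟨he, hall, v, hv, hvS⟩, hnot⟩
  · refine ⟨he, fun w hw => ?_, v, hv, hvX⟩
    have hwA : w ∈ A := by rcases hall w hw with ⟨-, h⟩ | ⟨h, -⟩ <;> exact h
    by_cases hwX : w ∈ X
    · exact Or.inl hwX
    · exact Or.inr ⟨Or.inl hwA, hwX⟩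
  · have hmeet : ∃ w ∈ e, w ∈ X := by
      by_contra hno
      push_neg at hno
      refine hnot ⟨he, fun w hw => ?_, v, hv, hvS, hno v hv⟩
      rcases hall w hw with h | h
      · exact Or.inl ⟨h, hno w hw⟩
      · exact Or.inr h
    obtain ⟨w, hw, hwX⟩ := hmeet
    refine ⟨he, fun u hu => ?_, w, hw, hwX⟩
    by_cases huX : u ∈ X
    · exact Or.inl huX
    · rcases hall u hu with h | h
      · exact Or.inr ⟨Or.inr h, huX⟩
      · exact Or.inr ⟨Or.inl h, huX⟩


lemma outDensity_of_disjoint (X Y : Finset V) (h : Disjoint X Y) :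
    outDensity G X Y = ((margEdges G X Y).card : ℚ) / X.card := by
  rw [outDensity, sdiff_eq_self_of_disjoint h]

lemma inter_eq_empty_iff_disjoint (X W : Finset V) : X ∩ W = ∅ ↔ Disjoint X W := by
  rw [← Finset.disjoint_iff_inter_eq_empty]

lemma maxset_locallyDense (A S : Finset V) (ρ : ℚ) (hA : LocallyDense G A)
    (hAS : Disjoint A S) (hSne : S.Nonempty)
    (hρ : ((margEdges G S A).card : ℚ) = ρ * S.card)
    (hmax : ∀ T : Finset V, Disjoint T A → ((margEdges G T A).card : ℚ) ≤ ρ * T.card)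
    (hstrict : ∀ T : Finset V, Disjoint T A → S ⊂ T → ((margEdges G T A).card : ℚ) < ρ * T.card) :
    LocallyDense G (A ∪ S) := by
  rintro ⟨X, Y, hXne, hYne, hXsub, hYdisj, hle⟩
  rw [inter_eq_empty_iff_disjoint] at hYdisj
  have hYA : Disjoint Y A := hYdisj.mono_right subset_union_left
  have hYS : Disjoint Y S := hYdisj.mono_right subset_union_right
  have hYpos : (0 : ℚ) < Y.card := by exact_mod_cast card_pos.mpr hYne
  have hXpos : (0 : ℚ) < X.card := by exact_mod_cast card_pos.mpr hXne
  -- Y side : outDensity G Y (A ∪ S) < ρ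
  have hYlt : outDensity G Y (A ∪ S) < ρ := by
    have hpart := margEdges_partition G A S Y hAS hYA.symm hYS.symm
    have hSY : S ⊂ S ∪ Y := by
      refine ⟨subset_union_left, fun hcon => ?_⟩
      obtain ⟨y, hy⟩ := hYne
      have : y ∈ S := hcon (mem_union_right _ hy)
      exact (disjoint_left.mp hYS hy) this
    have hbig := hstrict (S ∪ Y) (disjoint_union_left.mpr ⟨hAS.symm, hYA⟩) hSY
    rw [card_union_of_disjoint hYS.symm] at hbig
    rw [hpart] at hbig
    push_cast at hbig
    rw [outDensity_of_disjoint G Y (A ∪ S) hYdisj, div_lt_iff₀ hYpos]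
    linarith [hρ]
  -- X side : ρ ≤ outDensity G X ((A ∪ S) \ X)
  have hXge : ρ ≤ outDensity G X ((A ∪ S) \ X) := by
    set XA := X ∩ A with hXAdef
    set XS := X ∩ S with hXSdef
    have hXsplit : XA ∪ XS = X := by
      rw [hXAdef, hXSdef, ← inter_union_distrib_left, inter_eq_left.mpr hXsub]
    have hXAXS : Disjoint XA XS :=
      (hAS.mono inter_subset_right inter_subset_right)
    have hcardX : (X.card : ℚ) = XA.card + XS.card := by
      rw [← hXsplit, card_union_of_disjoint hXAXS]; push_cast; ring
    -- bound on edges inside A touching XA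
    have hm : ρ * XA.card ≤ ((margEdges G XA (A \ XA)).card : ℚ) := by
      rcases XA.eq_empty_or_nonempty with h | h
      · rw [h]; simp [margEdges_empty_left]
      · by_contra hcon
        push_neg at hcon
        have hXApos : (0 : ℚ) < XA.card := by exact_mod_cast card_pos.mpr h
        refine hA ⟨XA, S, h, hSne, inter_subset_right, ?_, ?_⟩
        · rw [inter_eq_empty_iff_disjoint]; exact hAS.symm
        · rw [outDensity_of_disjoint G XA (A \ XA) disjoint_sdiff,
            outDensity_of_disjoint G S A hAS.symm, hρ,
            mul_div_assoc, div_self (by positivity), mul_one, div_le_iff₀ hXApos]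
          linarith
    -- bound on the S part
    have hSX : ((margEdges G (S \ X) A).card : ℚ) ≤ ρ * ((S \ X).card : ℚ) :=
      hmax _ (hAS.symm.mono_left sdiff_subset)
    have hcardS : ((S \ X).card : ℚ) + XS.card = S.card := by
      have := Finset.card_sdiff_add_card_inter S X
      rw [hXSdef, inter_comm]
      push_cast [← this]
      ring
    have ht2 : ρ * XS.card ≤ (((margEdges G S A) \ (margEdges G (S \ X) A)).card : ℚ) := by
      have h1 : (margEdges G S A).card ≤
          ((margEdges G S A) \ (margEdges G (S \ X) A)).card + (margEdges G (S \ X) A).card :=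
        card_le_card_sdiff_add_card
      have h1' : ((margEdges G S A).card : ℚ) ≤
          (((margEdges G S A) \ (margEdges G (S \ X) A)).card : ℚ) + (margEdges G (S \ X) A).card := by
        exact_mod_cast h1
      rw [hρ] at h1'
      nlinarith [hSX, hcardS]
    have hbound := margEdges_X_bound G A S X hAS hXsub
    have hbound' : ρ * XA.card + ρ * XS.card ≤ ((margEdges G X ((A ∪ S) \ X)).card : ℚ) := by
      have : ((margEdges G (X ∩ A) (A \ (X ∩ A))).card : ℚ)
          + (((margEdges G S A) \ (margEdges G (S \ X) A)).card : ℚ)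
          ≤ ((margEdges G X ((A ∪ S) \ X)).card : ℚ) := by exact_mod_cast hbound
      rw [← hXAdef] at this
      linarith [hm, ht2]
    rw [outDensity_of_disjoint G X ((A ∪ S) \ X) disjoint_sdiff, le_div_iff₀ hXpos]
    rw [hcardX]
    linarith
  linarith
end helpers

theorem locallyDense_maximal [Fintype V] [DecidableEq V] (G : SimpleGraph V) [DecidableRel G.Adj]
    (k : ℕ) (B : ℕ → Finset V)
    (hchain : ∀ i j, i < j → j ≤ k → B i ⊂ B j)
    (hall : ∀ W : Finset V, LocallyDense G W ↔ ∃ i ≤ k, W = B i)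
 :
    B 0 = ∅ ∧ B k = Finset.univ ∧
    ∀ i, 1 ≤ i → i ≤ k → ∀ W : Finset V, B (i - 1) ⊂ W →
      outDensity G W (B (i - 1)) ≤ outDensity G (B i) (B (i - 1)) := by
  classical
  have hLD_empty : LocallyDense G (∅ : Finset V) := by
    rintro ⟨X, Y, hX, -, hXs, -, -⟩
    exact hX.ne_empty (subset_empty.mp hXs)
  have hLD_univ : LocallyDense G (univ : Finset V) := by
    rintro ⟨X, Y, -, hY, -, hYint, -⟩
    obtain ⟨y, hy⟩ := hY
    have : y ∈ Y ∩ univ := by simp [hy]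
    rw [hYint] at this
    exact absurd this (notMem_empty y)
  obtain ⟨i0, hi0k, h0⟩ := (hall ∅).mp hLD_empty
  have hB0 : B 0 = ∅ := by
    rcases Nat.eq_zero_or_pos i0 with h | h
    · rw [h] at h0; exact h0.symm
    · exfalso
      have hss := hchain 0 i0 h hi0k
      rw [← h0] at hss
      exact (Finset.not_ssubset_empty _) hss
  obtain ⟨ik, hikk, hk⟩ := (hall univ).mp hLD_univ
  have hBk : B k = univ := by
    rcases eq_or_lt_of_le hikk with h | h
    · rw [h] at hk; exact hk.symm
    · exfalso
      have h2 := hchain ik k h le_rfl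
      rw [← hk] at h2
      exact h2.2 (subset_univ _)
  refine ⟨hB0, hBk, ?_⟩
  intro i hi1 hik W hW
  set A := B (i - 1) with hAdef
  have hAld : LocallyDense G A := (hall A).mpr ⟨i - 1, by omega, rfl⟩
  have hAi : A ⊂ B i := hchain (i - 1) i (by omega) hik
  have hcne : (univ \ A).Nonempty := by
    obtain ⟨v, hv, hvA⟩ := exists_of_ssubset hAi
    exact ⟨v, mem_sdiff.mpr ⟨mem_univ v, hvA⟩⟩
  -- the ratio function
  set r : Finset V → ℚ := fun S => ((margEdges G S A).card : ℚ) / S.card with hrdef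
  set 𝒮 := (univ \ A).powerset.filter Finset.Nonempty with h𝒮def
  have hmem𝒮 : ∀ T : Finset V, T ∈ 𝒮 ↔ (Disjoint T A ∧ T.Nonempty) := by
    intro T
    simp only [h𝒮def, mem_filter, mem_powerset, subset_sdiff, subset_univ, true_and]
  have h𝒮ne : 𝒮.Nonempty := ⟨univ \ A, (hmem𝒮 _).mpr ⟨sdiff_disjoint, hcne⟩⟩
  obtain ⟨S₀, hS₀mem, hS₀max⟩ := 𝒮.exists_max_image r h𝒮ne
  set ρ := r S₀ with hρdef
  obtain ⟨S, hSmem', hSmax⟩ :=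
    (𝒮.filter (fun T => r T = ρ)).exists_max_image Finset.card ⟨S₀, by simp [hS₀mem]; rfl⟩
  rw [mem_filter] at hSmem'
  obtain ⟨hSmem, hSρ⟩ := hSmem'
  obtain ⟨hSA, hSne⟩ := (hmem𝒮 S).mp hSmem
  have hSpos : (0 : ℚ) < S.card := by exact_mod_cast card_pos.mpr hSne
  have hρS : ((margEdges G S A).card : ℚ) = ρ * S.card := by
    rw [← hSρ, hrdef]
    field_simp
  have hmax : ∀ T : Finset V, Disjoint T A → ((margEdges G T A).card : ℚ) ≤ ρ * T.card := by
    intro T hTA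
    rcases T.eq_empty_or_nonempty with h | h
    · subst h
      simp [margEdges]
    · have hTpos : (0 : ℚ) < T.card := by exact_mod_cast card_pos.mpr h
      have := hS₀max T ((hmem𝒮 T).mpr ⟨hTA, h⟩)
      rw [hrdef] at this
      rw [← div_le_iff₀ hTpos]
      exact this
  have hstrict : ∀ T : Finset V, Disjoint T A → S ⊂ T →
      ((margEdges G T A).card : ℚ) < ρ * T.card := by
    intro T hTA hST
    have hTne : T.Nonempty := hSne.mono hST.1
    have hTpos : (0 : ℚ) < T.card := by exact_mod_cast card_pos.mpr hTne
    have hle : ((margEdges G T A).card : ℚ) ≤ ρ * T.card := hmax T hTA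
    rcases lt_or_eq_of_le hle with h | h
    · exact h
    · exfalso
      have hrT : r T = ρ := by
        rw [hrdef]
        field_simp
        linarith [h]
      have := hSmax T (mem_filter.mpr ⟨(hmem𝒮 T).mpr ⟨hTA, hTne⟩, hrT⟩)
      exact absurd (card_lt_card hST) (not_lt.mpr this)
  -- the maximal maximizer is locally dense
  have hWld : LocallyDense G (A ∪ S) := maxset_locallyDense G A S ρ hAld hSA.symm hSne hρS hmax hstrict
  obtain ⟨j, hjk, hj⟩ := (hall (A ∪ S)).mp hWld
  -- B i ⊆ A ∪ S
  have hij : i ≤ j := by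
    by_contra hcon
    push_neg at hcon
    have hBj : B j ⊆ A := by
      rcases lt_or_eq_of_le (Nat.le_sub_one_of_lt hcon) with h | h
      · exact (hchain j (i - 1) h (by omega)).1
      · rw [hAdef, ← h]
    have : A ⊂ A ∪ S := by
      refine ⟨subset_union_left, fun hcon2 => ?_⟩
      obtain ⟨s, hs⟩ := hSne
      exact (disjoint_left.mp hSA hs) (hcon2 (mem_union_right _ hs))
    rw [hj] at this
    exact this.2 hBj
  have hBiW : B i ⊆ A ∪ S := by
    rcases lt_or_eq_of_le hij with h | h
    · rw [hj]; exact (hchain i j h hjk).1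
    · rw [hj, ← h]
  set P := B i \ A with hPdef
  have hPA : Disjoint P A := sdiff_disjoint
  have hPS : P ⊆ S := by
    intro v hv
    rw [hPdef, mem_sdiff] at hv
    rcases mem_union.mp (hBiW hv.1) with h | h
    · exact absurd h hv.2
    · exact h
  have hPne : P.Nonempty := by
    obtain ⟨v, hv, hvA⟩ := exists_of_ssubset hAi
    exact ⟨v, mem_sdiff.mpr ⟨hv, hvA⟩⟩
  have hPpos : (0 : ℚ) < P.card := by exact_mod_cast card_pos.mpr hPne
  have hBiAP : B i = A ∪ P := by
    rw [hPdef, union_sdiff_of_subset hAi.1]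
  -- show S ⊆ P, hence S = P, hence B i = A ∪ S
  have hSP : S = P := by
    by_contra hcon
    have hXne : (S \ P).Nonempty := by
      rw [sdiff_nonempty]
      intro h
      exact hcon (le_antisymm h hPS)
    have hXpos : (0 : ℚ) < (S \ P).card := by exact_mod_cast card_pos.mpr hXne
    -- local density of B i with X := P, Y := S \ P
    have hYdisj : (S \ P) ∩ B i = ∅ := by
      rw [inter_eq_empty_iff_disjoint, hBiAP, disjoint_union_right]
      exact ⟨hSA.mono_left sdiff_subset, disjoint_sdiff_self_left⟩
    have hBild : LocallyDense G (B i) := (hall (B i)).mpr ⟨i, hik, rfl⟩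
    have hnot : ¬ (outDensity G P (B i \ P) ≤ outDensity G (S \ P) (B i)) := by
      intro hcontra
      exact hBild ⟨P, S \ P, hPne, hXne, by rw [hBiAP]; exact subset_union_right, hYdisj, hcontra⟩
    -- compute the two densities
    have hBiP : B i \ P = A := by
      rw [hBiAP, union_sdiff_cancel_right]
      exact hPA.symm
    have hpart := margEdges_partition G A P (S \ P) hPA.symm
      (hSA.mono_left sdiff_subset).symm disjoint_sdiff_self_left.symm
    rw [union_sdiff_of_subset hPS] at hpart
    have hd1 : outDensity G P (B i \ P) = ((margEdges G P A).card : ℚ) / P.card := by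
      rw [hBiP, outDensity_of_disjoint G P A hPA]
    have hd2 : outDensity G (S \ P) (B i)
        = ((margEdges G (S \ P) (A ∪ P)).card : ℚ) / (S \ P).card := by
      rw [hBiAP, outDensity_of_disjoint G (S \ P) (A ∪ P)]
      rw [disjoint_union_right]
      exact ⟨hSA.mono_left sdiff_subset, disjoint_sdiff_self_left⟩
    rw [not_le, hd1, hd2, div_lt_div_iff₀ hXpos hPpos] at hnot
    have hScard : (S.card : ℚ) = P.card + (S \ P).card := by
      have := Finset.card_sdiff_add_card_eq_card hPS
      push_cast [← this]
      ring
    have hpart' : ((margEdges G S A).card : ℚ)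
        = ((margEdges G P A).card : ℚ) + ((margEdges G (S \ P) (A ∪ P)).card : ℚ) := by
      exact_mod_cast hpart
    have hPbound := hmax P hPA
    rw [hρS, hScard] at hpart'
    nlinarith [hnot, hPbound, hpart', hXpos, hPpos]
  rw [hSP] at hρS hSpos
  rw [hBiAP]
  -- final conclusion
  have hWA : Disjoint (W \ A) A := sdiff_disjoint
  have hWne : (W \ A).Nonempty := by
    obtain ⟨v, hv, hvA⟩ := exists_of_ssubset hW
    exact ⟨v, mem_sdiff.mpr ⟨hv, hvA⟩⟩
  have hWpos : (0 : ℚ) < (W \ A).card := by exact_mod_cast card_pos.mpr hWne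
  have h1 : outDensity G W A = ((margEdges G (W \ A) A).card : ℚ) / (W \ A).card := rfl
  have h2 : outDensity G (A ∪ P) A = ((margEdges G P A).card : ℚ) / P.card := by
    rw [outDensity]
    congr 2 <;> rw [union_sdiff_cancel_left hPA.symm]
  rw [h1, h2]
  rw [div_le_div_iff₀ hWpos hPpos]
  have hWbound := hmax (W \ A) hWA
  rw [hρS]
  nlinarith [hWbound, hWpos, hPpos]
end

section
/- The first nontrivial locally-dense subgraph B_1 in the locally-dense decomposition of a graph G is a densest subgraph of G, i.e., B_1 maximizes |E(X)|/|X| over all nonempty X ⊆ V. -/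
open Finset

variable {V : Type*}

section Aux
variable [Fintype V] [DecidableEq V] (G : SimpleGraph V) [DecidableRel G.Adj]


lemma innerEdges_empty : innerEdges G ∅ = ∅ := by
  ext e
  induction e using Sym2.ind with
  | _ a b => simp [innerEdges, or_imp, forall_and, forall_eq]

lemma margEdges_empty_right (A : Finset V) : margEdges G A ∅ = innerEdges G A := by
  ext e
  induction e using Sym2.ind with
  | _ a b =>
    simp only [margEdges, innerEdges, mem_filter, Sym2.mem_iff, union_empty, or_imp, forall_and, forall_eq, or_and_right, exists_or, exists_eq_left]
    tauto

lemma innerEdges_union_card {A C : Finset V} (h : Disjoint A C) :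
    (innerEdges G (A ∪ C)).card = (innerEdges G A).card + (margEdges G C A).card := by
  have heq : innerEdges G (A ∪ C) = innerEdges G A ∪ margEdges G C A := by
    ext e
    induction e using Sym2.ind with
    | _ a b =>
      simp only [innerEdges, margEdges, mem_filter, mem_union, Sym2.mem_iff, or_imp, forall_and, forall_eq, or_and_right, exists_or, exists_eq_left]
      tauto
  have hdisj : Disjoint (innerEdges G A) (margEdges G C A) := by
    rw [Finset.disjoint_left]
    intro e he1 he2
    simp only [innerEdges, margEdges, mem_filter] at he1 he2
    obtain ⟨v, hv, hvC⟩ := he2.2.2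
    exact (Finset.disjoint_left.mp h (he1.2 v hv)) hvC
  rw [heq, Finset.card_union_of_disjoint hdisj]

/-- Density of a vertex set, as a rational. -/
def densQ (X : Finset V) : ℚ := ((innerEdges G X).card : ℚ) / (X.card : ℚ)

lemma densQ_mul {X : Finset V} (hX : X.Nonempty) :
    ((innerEdges G X).card : ℚ) = densQ G X * X.card := by
  have : (X.card : ℚ) ≠ 0 := by exact_mod_cast (Finset.card_pos.mpr hX).ne'
  rw [densQ, div_mul_cancel₀ _ this]

lemma inner_card_split {A C : Finset V} (hCA : C ⊆ A) :
    (innerEdges G A).card = (innerEdges G (A \ C)).card + (margEdges G C (A \ C)).card := by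
  conv_lhs => rw [← Finset.sdiff_union_of_subset hCA]
  exact innerEdges_union_card G Finset.sdiff_disjoint

end Aux

theorem first_locallyDense_is_densest [Fintype V] [DecidableEq V] (G : SimpleGraph V) [DecidableRel G.Adj]
    (k : ℕ) (B : ℕ → Finset V)
    (hchain : ∀ i j, i < j → j ≤ k → B i ⊂ B j)
    (hall : ∀ W : Finset V, LocallyDense G W ↔ ∃ i ≤ k, W = B i)
    (hk : 1 ≤ k) :
    ∀ X : Finset V, X.Nonempty →
      ((innerEdges G X).card : ℚ) / (X.card : ℚ)
        ≤ ((innerEdges G (B 1)).card : ℚ) / ((B 1).card : ℚ) := by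
  classical
  -- B 0 = ∅
  have hB0 : B 0 = ∅ := by
    have hLDe : LocallyDense G ∅ := by
      rintro ⟨X, Y, hX, -, hsub, -, -⟩
      exact hX.ne_empty (Finset.subset_empty.mp hsub)
    obtain ⟨i, hik, hi⟩ := (hall ∅).mp hLDe
    rcases Nat.eq_zero_or_pos i with h0 | h0
    · rw [h0] at hi; exact hi.symm
    · exact absurd (hi ▸ hchain 0 i h0 hik) (by simp)
  have hB1ne : (B 1).Nonempty := by
    have h := hchain 0 1 one_pos hk
    rw [hB0] at h
    exact Finset.nonempty_of_ne_empty (fun he => (he ▸ h).2 (by simp))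
  -- choose a densest set of maximal cardinality
  have hdq : ∀ X : Finset V, densQ G X = ((innerEdges G X).card : ℚ) / (X.card : ℚ) :=
    fun _ => rfl
  set S : Finset (Finset V) := Finset.univ.filter (fun X => X.Nonempty) with hS
  have hSmem : ∀ X : Finset V, X ∈ S ↔ X.Nonempty := by simp [hS]
  obtain ⟨X0, hX0S, hmax0⟩ := S.exists_max_image (densQ G) ⟨B 1, (hSmem _).mpr hB1ne⟩
  set S' : Finset (Finset V) := S.filter (fun X => densQ G X = densQ G X0) with hS'
  obtain ⟨Xs, hXsS', hcmax⟩ := S'.exists_max_image (fun X => X.card)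
    ⟨X0, by simp [hS', hX0S]⟩
  rw [hS', Finset.mem_filter] at hXsS'
  obtain ⟨hXsS, hXsd⟩ := hXsS'
  have hXsne : Xs.Nonempty := (hSmem _).mp hXsS
  have hdmax : ∀ X : Finset V, X.Nonempty → densQ G X ≤ densQ G Xs := by
    intro X hX
    rw [hXsd]
    exact hmax0 X ((hSmem _).mpr hX)
  have hcard : ∀ X : Finset V, X.Nonempty → densQ G X = densQ G Xs → X.card ≤ Xs.card := by
    intro X hX hd
    exact hcmax X (by rw [hS', Finset.mem_filter]; exact ⟨(hSmem _).mpr hX, hd.trans hXsd⟩)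
  have hcs : (0:ℚ) < Xs.card := by exact_mod_cast Finset.card_pos.mpr hXsne
  have hEXs : ((innerEdges G Xs).card : ℚ) = densQ G Xs * Xs.card := densQ_mul G hXsne
  -- Xs is locally dense
  have hLDXs : LocallyDense G Xs := by
    rintro ⟨X', Y, hX'ne, hYne, hX'sub, hYint, hle⟩
    have hdisjY : Disjoint Y Xs := Finset.disjoint_iff_inter_eq_empty.mpr hYint
    have hc' : (0:ℚ) < X'.card := by exact_mod_cast Finset.card_pos.mpr hX'ne
    have hcy : (0:ℚ) < Y.card := by exact_mod_cast Finset.card_pos.mpr hYne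
    have hsplit : ((innerEdges G Xs).card : ℚ)
        = (innerEdges G (Xs \ X')).card + (margEdges G X' (Xs \ X')).card := by
      exact_mod_cast inner_card_split G hX'sub
    have hsubden : ((innerEdges G (Xs \ X')).card : ℚ) ≤ densQ G Xs * (Xs \ X').card := by
      rcases (Xs \ X').eq_empty_or_nonempty with h | h
      · simp [h, innerEdges_empty]
      · have hpos : (0:ℚ) < (Xs \ X').card := by exact_mod_cast Finset.card_pos.mpr h
        have := hdmax _ h
        rw [hdq, div_le_iff₀ hpos] at this
        exact this
    have hcardsdiff : ((Xs \ X').card : ℚ) = Xs.card - X'.card := by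
      rw [Finset.card_sdiff_of_subset hX'sub, Nat.cast_sub (Finset.card_le_card hX'sub)]
    rw [hcardsdiff, mul_sub] at hsubden
    have hmarg1 : densQ G Xs * X'.card ≤ ((margEdges G X' (Xs \ X')).card : ℚ) := by
      linarith
    have h1 : outDensity G X' (Xs \ X')
        = ((margEdges G X' (Xs \ X')).card : ℚ) / X'.card := by
      rw [outDensity, Finset.sdiff_eq_self_iff_disjoint.mpr Finset.disjoint_sdiff]
    have h2 : outDensity G Y Xs = ((margEdges G Y Xs).card : ℚ) / Y.card := by
      rw [outDensity, Finset.sdiff_eq_self_iff_disjoint.mpr hdisjY]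
    have hdY : densQ G Xs * Y.card ≤ ((margEdges G Y Xs).card : ℚ) := by
      have h3 : densQ G Xs ≤ outDensity G X' (Xs \ X') := by
        rw [h1, le_div_iff₀ hc']; exact hmarg1
      have h4 := (h3.trans hle)
      rw [h2, le_div_iff₀ hcy] at h4
      exact h4
    have hdisjXY : Disjoint Xs Y := hdisjY.symm
    have hZcardE : ((innerEdges G (Xs ∪ Y)).card : ℚ)
        = (innerEdges G Xs).card + (margEdges G Y Xs).card := by
      exact_mod_cast innerEdges_union_card G hdisjXY
    have hZne : (Xs ∪ Y).Nonempty := hXsne.mono Finset.subset_union_left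
    have hZcard : ((Xs ∪ Y).card : ℚ) = Xs.card + Y.card := by
      exact_mod_cast Finset.card_union_of_disjoint hdisjXY
    have hZge : densQ G Xs ≤ densQ G (Xs ∪ Y) := by
      rw [hdq (Xs ∪ Y), le_div_iff₀ (show (0:ℚ) < ((Xs ∪ Y).card : ℚ) by
        rw [hZcard]; linarith), hZcardE, hZcard, mul_add]
      linarith
    have hZd : densQ G (Xs ∪ Y) = densQ G Xs := le_antisymm (hdmax _ hZne) hZge
    have hle' := hcard _ hZne hZd
    rw [Finset.card_union_of_disjoint hdisjXY] at hle'
    have hy0 : 0 < Y.card := Finset.card_pos.mpr hYne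
    omega
  -- Xs = B i for some i ≥ 1, hence B 1 ⊆ Xs
  obtain ⟨i, hik, hXsBi⟩ := (hall Xs).mp hLDXs
  have hi1 : 1 ≤ i := by
    rcases Nat.eq_zero_or_pos i with h0 | h0
    · rw [h0, hB0] at hXsBi; exact absurd hXsBi hXsne.ne_empty
    · exact h0
  have hB1sub : B 1 ⊆ Xs := by
    rcases eq_or_lt_of_le hi1 with h | h
    · rw [hXsBi, ← h]
    · rw [hXsBi]; exact (hchain 1 i h hik).subset
  have hLDB1 : LocallyDense G (B 1) := (hall (B 1)).mpr ⟨1, hk, rfl⟩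
  have hcb : (0:ℚ) < (B 1).card := by exact_mod_cast Finset.card_pos.mpr hB1ne
  -- Xs = B 1
  have hXseq : Xs = B 1 := by
    by_contra hne
    have hYne : (Xs \ B 1).Nonempty := by
      rw [Finset.sdiff_nonempty]
      intro hsub
      exact hne (Finset.Subset.antisymm hsub hB1sub)
    set Y := Xs \ B 1 with hY
    have hkey : ¬ (outDensity G (B 1) (B 1 \ B 1) ≤ outDensity G Y (B 1)) := fun hle =>
      hLDB1 ⟨B 1, Y, hB1ne, hYne, Finset.Subset.refl _, Finset.sdiff_inter_self _ _, hle⟩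
    have hlt := not_le.mp hkey
    have e1 : outDensity G (B 1) (B 1 \ B 1) = densQ G (B 1) := by
      rw [outDensity, Finset.sdiff_self, Finset.sdiff_empty, margEdges_empty_right, hdq]
    have e2 : outDensity G Y (B 1) = ((margEdges G Y (B 1)).card : ℚ) / Y.card := by
      rw [outDensity, Finset.sdiff_eq_self_iff_disjoint.mpr Finset.sdiff_disjoint]
    rw [e1, e2] at hlt
    have hcy : (0:ℚ) < Y.card := by exact_mod_cast Finset.card_pos.mpr hYne
    rw [div_lt_iff₀ hcy] at hlt
    have hunion : B 1 ∪ Y = Xs := Finset.union_sdiff_of_subset hB1sub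
    have hEsplit : ((innerEdges G Xs).card : ℚ)
        = (innerEdges G (B 1)).card + (margEdges G Y (B 1)).card := by
      rw [← hunion]
      exact_mod_cast innerEdges_union_card G Finset.disjoint_sdiff
    have hcseq : (Xs.card : ℚ) = (B 1).card + Y.card := by
      rw [← hunion]
      exact_mod_cast Finset.card_union_of_disjoint Finset.disjoint_sdiff
    have hEB1 : ((innerEdges G (B 1)).card : ℚ) = densQ G (B 1) * (B 1).card :=
      densQ_mul G hB1ne
    have hdb : densQ G (B 1) ≤ densQ G Xs := hdmax _ hB1ne
    have hmul : densQ G (B 1) * (Xs.card : ℚ)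
        = densQ G (B 1) * ((B 1).card : ℚ) + densQ G (B 1) * (Y.card : ℚ) := by
      rw [hcseq, mul_add]
    have hfin : densQ G (B 1) * (Xs.card : ℚ) ≤ densQ G Xs * (Xs.card : ℚ) :=
      mul_le_mul_of_nonneg_right hdb hcs.le
    linarith
  intro X hX
  rw [← hdq, ← hdq, ← hXseq]
  exact hdmax X hX
end

section
/- For any real α ≥ 0, every maximizer U (chosen largest among maximizers) of the function W ↦ |E(W)| − α|W| over W ⊆ V is a locally-dense subgraph. In particular, for every nonempty X ⊆ U we have d(X, U\X) ≥ α, and for every nonempty Y disjoint from U we have d(Y, U) < α. -/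
open Finset

variable {V : Type*}

lemma inner_split [Fintype V] [DecidableEq V] (G : SimpleGraph V) [DecidableRel G.Adj]
    (A B : Finset V) (hd : Disjoint A B) :
    (innerEdges G (A ∪ B)).card = (innerEdges G B).card + (margEdges G A B).card := by
  have hdisj : Disjoint (innerEdges G B) (margEdges G A B) := by
    rw [Finset.disjoint_left]
    intro e he1 he2
    simp only [innerEdges, margEdges, mem_filter] at he1 he2
    obtain ⟨v, hv, hvA⟩ := he2.2.2
    exact (Finset.disjoint_left.mp hd hvA) (he1.2 v hv)
  have hun : innerEdges G (A ∪ B) = innerEdges G B ∪ margEdges G A B := by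
    unfold innerEdges margEdges
    rw [← Finset.filter_or]
    apply Finset.filter_congr
    intro e he
    induction e using Sym2.ind with
    | _ x y =>
      simp only [Sym2.mem_iff, forall_eq_or_imp, forall_eq, mem_union, exists_eq_or_imp,
        exists_eq_left]
      constructor
      · rintro ⟨hx, hy⟩
        by_cases hxA : x ∈ A
        · exact Or.inr ⟨⟨hx, hy⟩, Or.inl hxA⟩
        · by_cases hyA : y ∈ A
          · exact Or.inr ⟨⟨hx, hy⟩, Or.inr hyA⟩
          · exact Or.inl ⟨hx.resolve_left hxA, hy.resolve_left hyA⟩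
      · rintro (⟨hx, hy⟩ | ⟨h, _⟩)
        · exact ⟨Or.inr hx, Or.inr hy⟩
        · exact h
  rw [hun, Finset.card_union_of_disjoint hdisj]

theorem maximizer_is_locallyDense [Fintype V] [DecidableEq V] (G : SimpleGraph V) [DecidableRel G.Adj]
    (α : ℚ) (hα : 0 ≤ α) (U : Finset V)
    (hmax : ∀ W : Finset V,
      ((innerEdges G W).card : ℚ) - α * W.card ≤ ((innerEdges G U).card : ℚ) - α * U.card)
    (hbig : ∀ W : Finset V,
      ((innerEdges G W).card : ℚ) - α * W.card = ((innerEdges G U).card : ℚ) - α * U.card →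
      W ⊆ U) :
    LocallyDense G U ∧
    (∀ X : Finset V, X.Nonempty → X ⊆ U → α ≤ outDensity G X (U \ X)) ∧
    (∀ Y : Finset V, Y.Nonempty → Y ∩ U = ∅ → outDensity G Y U < α) := by
  have key1 : ∀ X : Finset V, X.Nonempty → X ⊆ U → α ≤ outDensity G X (U \ X) := by
    intro X hX hXU
    have hd : Disjoint X (U \ X) := Finset.disjoint_sdiff
    have hcard := inner_split G X (U \ X) hd
    rw [Finset.union_sdiff_of_subset hXU] at hcard
    have hU : (U \ X).card + X.card = U.card := Finset.card_sdiff_add_card_eq_card hXU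
    have hmax' := hmax (U \ X)
    have hkey : α * X.card ≤ ((margEdges G X (U \ X)).card : ℚ) := by
      have h1 : ((innerEdges G U).card : ℚ)
          = (innerEdges G (U \ X)).card + (margEdges G X (U \ X)).card := by
        exact_mod_cast hcard
      have h2 : ((U : Finset V).card : ℚ) = ((U \ X).card : ℚ) + X.card := by
        exact_mod_cast hU.symm
      nlinarith [hmax']
    have hXs : X \ (U \ X) = X := by
      ext a; simp (config := {contextual := true}) [Finset.mem_sdiff]
    have hXpos : (0 : ℚ) < X.card := by exact_mod_cast Finset.card_pos.mpr hX
    rw [outDensity, hXs, le_div_iff₀ hXpos]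
    linarith [hkey]
  have key2 : ∀ Y : Finset V, Y.Nonempty → Y ∩ U = ∅ → outDensity G Y U < α := by
    intro Y hY hYU
    have hd : Disjoint Y U := Finset.disjoint_iff_inter_eq_empty.mpr hYU
    have hcard := inner_split G Y U hd
    have hUY : (Y ∪ U).card = Y.card + U.card := Finset.card_union_of_disjoint hd
    have hmax' := hmax (Y ∪ U)
    have hne : ((innerEdges G (Y ∪ U)).card : ℚ) - α * (Y ∪ U).card
        ≠ ((innerEdges G U).card : ℚ) - α * U.card := by
      intro h
      have hsub := hbig _ h
      obtain ⟨y, hy⟩ := hY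
      have : y ∈ U := hsub (Finset.mem_union_left _ hy)
      exact (Finset.disjoint_left.mp hd hy) this
    have hkey : ((margEdges G Y U).card : ℚ) < α * Y.card := by
      have h1 : ((innerEdges G (Y ∪ U)).card : ℚ)
          = (innerEdges G U).card + (margEdges G Y U).card := by exact_mod_cast hcard
      have h2 : (((Y ∪ U) : Finset V).card : ℚ) = (Y.card : ℚ) + U.card := by
        exact_mod_cast hUY
      have hlt := lt_of_le_of_ne hmax' hne
      nlinarith [hlt]
    have hYs : Y \ U = Y := Finset.sdiff_eq_self_of_disjoint hd
    have hYpos : (0 : ℚ) < Y.card := by exact_mod_cast Finset.card_pos.mpr hY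
    rw [outDensity, hYs, div_lt_iff₀ hYpos]
    linarith [hkey]
  refine ⟨?_, key1, key2⟩
  rintro ⟨X, Y, hX, hY, hXU, hYU, hle⟩
  exact absurd (le_trans (key1 X hX hXU) hle) (not_le.mpr (key2 Y hY hYU))
end

section
/- Goldberg-style min-cut reduction correctness: let G = (V,E), X ⊆ V, α ≥ 0. Construct a weighted graph H on vertex set (V\X) ∪ {s,t} with unit-weight edges E(V\X), edges (y,t) of weight 2α for each y ∈ V\X, and edges (s,y) of weight deg(y; V\X) + 2·deg(y; X). Then for any Z ⊆ V\X, the capacity of the s–t cut ({s} ∪ Z, rest) equals 2|E| − 2α|X| − 2(|E(X ∪ Z)| − α|X ∪ Z|). Consequently, a minimum s–t cut {s} ∪ Z* yields X ∪ Z* as a maximizer of |E(W)| − α|W| over all W with X ⊆ W ⊆ V. -/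
open Finset

variable {V : Type*}

/-- Number of edges between disjoint sets `A` and `B` (counted as ordered pairs in `A × B`). -/
def crossCard [DecidableEq V] (G : SimpleGraph V) [DecidableRel G.Adj] (A B : Finset V) : ℕ :=
  ((A ×ˢ B).filter (fun p => G.Adj p.1 p.2)).card

/-- Capacity of the s-t cut `({s} ∪ Z, rest)` in the Goldberg-style graph `H`. -/
def cutCap [Fintype V] [DecidableEq V] (G : SimpleGraph V) [DecidableRel G.Adj]
    (X : Finset V) (α : ℚ) (Z : Finset V) : ℚ :=
  2 * (Z.card : ℚ) * α
    + ∑ y ∈ (Finset.univ \ X) \ Z,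
        ((degIn G y (Finset.univ \ X) : ℚ) + 2 * (degIn G y X : ℚ))
    + (crossCard G Z ((Finset.univ \ X) \ Z) : ℚ)

section Aux

variable [Fintype V] [DecidableEq V] (G : SimpleGraph V) [DecidableRel G.Adj]

lemma degIn_union (y : V) {B C : Finset V} (h : Disjoint B C) :
    degIn G y (B ∪ C) = degIn G y B + degIn G y C := by
  unfold degIn
  rw [filter_union, card_union_of_disjoint
    (Finset.disjoint_filter_filter h)]

lemma sum_degIn (A B : Finset V) :
    ∑ y ∈ A, degIn G y B = crossCard G A B := by
  unfold degIn crossCard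
  rw [Finset.card_filter, Finset.sum_product]
  refine Finset.sum_congr rfl fun a _ => ?_
  rw [Finset.card_filter]

lemma crossCard_comm (A B : Finset V) : crossCard G A B = crossCard G B A := by
  unfold crossCard
  rw [Finset.card_filter, Finset.card_filter, Finset.sum_product, Finset.sum_product,
    Finset.sum_comm]
  exact Finset.sum_congr rfl fun b _ => Finset.sum_congr rfl fun a _ =>
    if_congr (G.adj_comm a b) rfl rfl

lemma crossCard_union_right (A : Finset V) {B C : Finset V} (h : Disjoint B C) :
    crossCard G A (B ∪ C) = crossCard G A B + crossCard G A C := by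
  rw [← sum_degIn, ← sum_degIn, ← sum_degIn, ← Finset.sum_add_distrib]
  exact Finset.sum_congr rfl fun y _ => degIn_union G y h

lemma sum_degIn_self (R : Finset V) :
    ∑ y ∈ R, degIn G y R = 2 * (innerEdges G R).card := by
  classical
  let G' : SimpleGraph V :=
    { Adj := fun a b => G.Adj a b ∧ a ∈ R ∧ b ∈ R
      symm := ⟨fun a b ⟨h, ha, hb⟩ => ⟨h.symm, hb, ha⟩⟩
      loopless := ⟨fun a ⟨h, _, _⟩ => G.loopless.irrefl a h⟩ }
  haveI : DecidableRel G'.Adj := fun a b => instDecidableAnd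
  have hdeg : ∀ v, G'.degree v = if v ∈ R then degIn G v R else 0 := by
    intro v
    rw [SimpleGraph.degree, SimpleGraph.neighborFinset_eq_filter]
    by_cases hv : v ∈ R
    · rw [if_pos hv]
      unfold degIn
      congr 1
      ext w
      simp only [mem_filter, mem_univ, true_and]
      exact ⟨fun h => ⟨h.2.2, h.1⟩, fun h => ⟨h.2, hv, h.1⟩⟩
    · rw [if_neg hv, card_eq_zero]
      ext w
      simp only [mem_filter, mem_univ, true_and, Finset.notMem_empty, iff_false]
      exact fun h => hv h.2.1
  have hE : G'.edgeFinset = innerEdges G R := by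
    ext e
    induction e using Sym2.ind with
    | _ a b =>
      simp only [SimpleGraph.mem_edgeFinset, innerEdges, mem_filter,
        SimpleGraph.mem_edgeSet, Sym2.mem_iff]
      show (G.Adj a b ∧ a ∈ R ∧ b ∈ R) ↔ _
      constructor
      · rintro ⟨h, ha, hb⟩
        exact ⟨h, fun v hv => by rcases hv with rfl | rfl <;> assumption⟩
      · rintro ⟨h, hall⟩
        exact ⟨h, hall a (Or.inl rfl), hall b (Or.inr rfl)⟩
  have hsum := G'.sum_degrees_eq_twice_card_edges
  simp_rw [hdeg] at hsum
  rw [Finset.sum_ite_mem, Finset.univ_inter, hE] at hsum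
  exact hsum

lemma two_mul_card_edges :
    ∑ v, degIn G v Finset.univ = 2 * G.edgeFinset.card := by
  rw [← G.sum_degrees_eq_twice_card_edges]
  refine Finset.sum_congr rfl fun v _ => ?_
  rw [SimpleGraph.degree, SimpleGraph.neighborFinset_eq_filter]
  rfl

end Aux

theorem goldberg_cut_correct [Fintype V] [DecidableEq V] (G : SimpleGraph V) [DecidableRel G.Adj]
    (X : Finset V) (α : ℚ) (hα : 0 ≤ α) :
    (∀ Z : Finset V, Z ⊆ Finset.univ \ X →
      cutCap G X α Z
        = 2 * (G.edgeFinset.card : ℚ) - 2 * α * (X.card : ℚ)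
          - 2 * (((innerEdges G (X ∪ Z)).card : ℚ) - α * ((X ∪ Z).card : ℚ))) ∧
    (∀ Zs : Finset V, Zs ⊆ Finset.univ \ X →
      (∀ Z : Finset V, Z ⊆ Finset.univ \ X → cutCap G X α Zs ≤ cutCap G X α Z) →
      ∀ W : Finset V, X ⊆ W →
        ((innerEdges G W).card : ℚ) - α * (W.card : ℚ)
          ≤ ((innerEdges G (X ∪ Zs)).card : ℚ) - α * ((X ∪ Zs).card : ℚ)) := by
  have key : ∀ Z : Finset V, Z ⊆ Finset.univ \ X →
      cutCap G X α Z
        = 2 * (G.edgeFinset.card : ℚ) - 2 * α * (X.card : ℚ)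
          - 2 * (((innerEdges G (X ∪ Z)).card : ℚ) - α * ((X ∪ Z).card : ℚ)) := by
    intro Z hZ
    set S := X ∪ Z with hS
    set R := (Finset.univ \ X) \ Z with hR
    have hXZ : Disjoint X Z := by
      refine Finset.disjoint_left.2 fun a haX haZ => ?_
      exact (Finset.mem_sdiff.1 (hZ haZ)).2 haX
    have hZR : Disjoint Z R := Finset.sdiff_disjoint.symm
    have hunivX : Finset.univ \ X = Z ∪ R := (Finset.union_sdiff_of_subset hZ).symm
    have hRS : R = Finset.univ \ S := by
      rw [hR, hS]
      ext v; simp [and_comm]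
    have hSR : Disjoint S R := by rw [hRS]; exact Finset.disjoint_sdiff
    have hUniv : (Finset.univ : Finset V) = S ∪ R := by
      rw [hRS]
      exact (Finset.union_sdiff_of_subset (Finset.subset_univ S)).symm
    -- natural number identities
    have h1 : ∑ y ∈ R, degIn G y (Finset.univ \ X)
        = crossCard G R Z + 2 * (innerEdges G R).card := by
      rw [hunivX]
      rw [show (∑ y ∈ R, degIn G y (Z ∪ R))
          = ∑ y ∈ R, (degIn G y Z + degIn G y R) from
        Finset.sum_congr rfl fun y _ => degIn_union G y hZR]
      rw [Finset.sum_add_distrib, sum_degIn, sum_degIn_self]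
    have h2 : ∑ y ∈ R, degIn G y X = crossCard G R X := sum_degIn G R X
    have h3 : 2 * G.edgeFinset.card
        = 2 * (innerEdges G S).card + crossCard G S R + crossCard G R S
          + 2 * (innerEdges G R).card := by
      rw [← two_mul_card_edges]
      rw [show (∑ v, degIn G v Finset.univ) = ∑ v ∈ S ∪ R, degIn G v (S ∪ R) by
        rw [← hUniv]]
      rw [Finset.sum_union hSR]
      rw [show (∑ v ∈ S, degIn G v (S ∪ R)) = ∑ v ∈ S, (degIn G v S + degIn G v R) from
        Finset.sum_congr rfl fun y _ => degIn_union G y hSR]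
      rw [show (∑ v ∈ R, degIn G v (S ∪ R)) = ∑ v ∈ R, (degIn G v S + degIn G v R) from
        Finset.sum_congr rfl fun y _ => degIn_union G y hSR]
      rw [Finset.sum_add_distrib, Finset.sum_add_distrib, sum_degIn_self, sum_degIn_self,
        sum_degIn, sum_degIn]
      ring
    have h4 : crossCard G R S = crossCard G R X + crossCard G R Z :=
      crossCard_union_right G R hXZ
    have h5 : crossCard G S R = crossCard G R S := crossCard_comm G S R
    have h6 : crossCard G Z R = crossCard G R Z := crossCard_comm G Z R
    have hcard : S.card = X.card + Z.card := Finset.card_union_of_disjoint hXZ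
    have hNat : (∑ y ∈ R, (degIn G y (Finset.univ \ X) + 2 * degIn G y X))
        + crossCard G Z R + 2 * (innerEdges G S).card = 2 * G.edgeFinset.card := by
      rw [Finset.sum_add_distrib, h1, ← Finset.mul_sum, h2, h6, h3, h5, h4]
      ring
    have hNatQ : ((∑ y ∈ R, (degIn G y (Finset.univ \ X) + 2 * degIn G y X) : ℕ) : ℚ)
        + (crossCard G Z R : ℚ) + 2 * ((innerEdges G S).card : ℚ)
        = 2 * (G.edgeFinset.card : ℚ) := by exact_mod_cast hNat
    have hcardQ : ((S.card : ℚ)) = (X.card : ℚ) + (Z.card : ℚ) := by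
      exact_mod_cast hcard
    unfold cutCap
    rw [show (∑ y ∈ (Finset.univ \ X) \ Z,
          ((degIn G y (Finset.univ \ X) : ℚ) + 2 * (degIn G y X : ℚ)))
        = ((∑ y ∈ R, (degIn G y (Finset.univ \ X) + 2 * degIn G y X) : ℕ) : ℚ) by
      push_cast; rw [← hR]]
    have hα2 : α * (S.card : ℚ) = α * (X.card : ℚ) + α * (Z.card : ℚ) := by
      rw [hcardQ]; ring
    simp only [← hR]
    linarith
  refine ⟨key, fun Zs hZs hmin W hXW => ?_⟩
  have hZW : W \ X ⊆ Finset.univ \ X :=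
    Finset.sdiff_subset_sdiff (Finset.subset_univ W) le_rfl
  have hW : X ∪ (W \ X) = W := Finset.union_sdiff_of_subset hXW
  have e1 := key Zs hZs
  have e2 := key (W \ X) hZW
  rw [hW] at e2
  have := hmin (W \ X) hZW
  rw [e1, e2] at this
  linarith
end

section
/- Let ∅ = B_0 ⊊ ⋯ ⊊ B_k = V be the locally-dense chain and let v be any vertex of B_i \ B_{i-1}. Then the number of neighbors of v inside B_i is at least d(B_i, B_{i-1}); equivalently, deg(v; B_i) ≥ |Ẽ(B_i\B_{i-1}, B_{i-1})| / |B_i\B_{i-1}|. -/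
open Finset

variable {V : Type*}

section Aux

variable [Fintype V] [DecidableEq V] (G : SimpleGraph V) [DecidableRel G.Adj]

lemma innerEdges_split (A X : Finset V) (hXA : X ⊆ A) :
    (innerEdges G A).card
      = (innerEdges G (A \ X)).card + (margEdges G X (A \ X)).card := by
  classical
  have hU : X ∪ A \ X = A := Finset.union_sdiff_of_subset hXA
  have h2 : margEdges G X (A \ X)
      = (innerEdges G A).filter (fun e => ∃ v ∈ e, v ∈ X) := by
    unfold margEdges innerEdges
    rw [hU, Finset.filter_filter]
  have h1 : innerEdges G (A \ X)
      = (innerEdges G A).filter (fun e => ¬ ∃ v ∈ e, v ∈ X) := by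
    unfold innerEdges
    rw [Finset.filter_filter]
    apply Finset.filter_congr
    intro e _
    simp only [Finset.mem_sdiff, not_exists, not_and]
    constructor
    · intro h
      exact ⟨fun v hv => (h v hv).1, fun v hv => (h v hv).2⟩
    · intro h v hv
      exact ⟨h.1 v hv, h.2 v hv⟩
  have := Finset.card_filter_add_card_filter_not
    (s := innerEdges G A) (p := fun e => ∃ v ∈ e, v ∈ X)
  rw [h1, h2]
  omega

lemma innerEdges_union (A Y : Finset V) (hd : Disjoint Y A) :
    (innerEdges G (A ∪ Y)).card = (innerEdges G A).card + (margEdges G Y A).card := by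
  have h := innerEdges_split G (A ∪ Y) Y Finset.subset_union_right
  have h2 : (A ∪ Y) \ Y = A := by
    rw [Finset.union_sdiff_right, Finset.sdiff_eq_self_iff_disjoint]
    exact hd.symm
  rwa [h2] at h

lemma margEdges_singleton (x : V) (Z : Finset V) (_hx : x ∉ Z) :
    (margEdges G {x} Z).card = (Z.filter (G.Adj x)).card := by
  classical
  have himg : margEdges G {x} Z = (Z.filter (G.Adj x)).image (fun u => s(x, u)) := by
    ext e
    simp only [margEdges, Finset.mem_filter, Finset.mem_image, SimpleGraph.mem_edgeFinset]
    constructor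
    · rintro ⟨he, hall, w, hwe, hwx⟩
      induction e with
      | h p q =>
        rw [SimpleGraph.mem_edgeSet] at he
        simp only [Finset.mem_singleton] at hwx
        subst hwx
        simp only [Sym2.mem_iff] at hwe
        simp only [Sym2.mem_iff, Finset.mem_union, Finset.mem_singleton] at hall
        rcases hwe with rfl | rfl
        · have hq : q ∈ Z := by
            rcases hall q (Or.inr rfl) with h | h
            · exact absurd (h ▸ he) (G.loopless.irrefl _)
            · exact h
          exact ⟨q, ⟨hq, he⟩, rfl⟩
        · have hp : p ∈ Z := by
            rcases hall p (Or.inl rfl) with h | h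
            · exact absurd (h ▸ he) (G.loopless.irrefl _)
            · exact h
          exact ⟨p, ⟨hp, he.symm⟩, Sym2.eq_swap⟩
    · rintro ⟨u, hu, rfl⟩
      obtain ⟨huZ, hadj⟩ := hu
      refine ⟨(SimpleGraph.mem_edgeSet G).mpr hadj, ?_, x, Sym2.mem_mk_left x u,
        Finset.mem_singleton_self x⟩
      intro w hw
      simp only [Sym2.mem_iff] at hw
      rcases hw with rfl | rfl
      · exact Finset.mem_union_left _ (Finset.mem_singleton_self w)
      · exact Finset.mem_union_right _ huZ
  rw [himg]
  apply Finset.card_image_of_injective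
  intro a b hab
  exact Sym2.congr_right.mp hab

lemma margEdges_singleton_degIn (x : V) (A : Finset V) (hx : x ∈ A) :
    (margEdges G {x} (A \ {x})).card = degIn G x A := by
  rw [margEdges_singleton G x _ (by simp)]
  unfold degIn
  congr 1
  ext u
  simp only [Finset.mem_filter, Finset.mem_sdiff, Finset.mem_singleton]
  constructor
  · rintro ⟨⟨h1, _⟩, h2⟩; exact ⟨h1, h2⟩
  · rintro ⟨h1, h2⟩; exact ⟨⟨h1, h2.ne'⟩, h2⟩

end Aux

theorem degree_ge_outer_density [Fintype V] [DecidableEq V] (G : SimpleGraph V) [DecidableRel G.Adj]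
    (k : ℕ) (B : ℕ → Finset V)
    (hchain : ∀ i j, i < j → j ≤ k → B i ⊂ B j)
    (hall : ∀ W : Finset V, LocallyDense G W ↔ ∃ i ≤ k, W = B i)
    (i : ℕ) (hi1 : 1 ≤ i) (hik : i ≤ k)
    (v : V) (hv : v ∈ B i \ B (i - 1)) :
    outDensity G (B i) (B (i - 1)) ≤ (degIn G v (B i) : ℚ) := by
  classical
  by_contra hcon
  push_neg at hcon
  set S : Finset V := B i \ B (i - 1) with hS
  have hvS : v ∈ S := hv
  have hSne : S.Nonempty := ⟨v, hvS⟩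
  have hSpos : (0:ℚ) < (S.card : ℚ) := by exact_mod_cast Finset.card_pos.mpr hSne
  have hB1i : B (i-1) ⊆ B i := (hchain (i-1) i (by omega) hik).subset
  have hBiU : B (i-1) ∪ S = B i := Finset.union_sdiff_of_subset hB1i
  have hSd : Disjoint S (B (i-1)) := Finset.sdiff_disjoint
  have hsplitS : (innerEdges G (B i)).card
      = (innerEdges G (B (i-1))).card + (margEdges G S (B (i-1))).card := by
    have h := innerEdges_union G (B (i-1)) S hSd
    rwa [hBiU] at h
  have hcardS : (B i).card = (B (i-1)).card + S.card := by
    have h1 : S.card = (B i).card - (B (i-1)).card := by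
      rw [hS]; exact Finset.card_sdiff_of_subset hB1i
    have h2 := Finset.card_le_card hB1i
    omega
  set d : ℚ := outDensity G (B i) (B (i - 1)) with hd
  have hdval : d * (S.card : ℚ) = ((margEdges G S (B (i-1))).card : ℚ) := by
    rw [hd, outDensity, ← hS]
    field_simp
  set c : ℚ := ((degIn G v (B i) : ℚ) + d) / 2 with hc
  have hdegc : (degIn G v (B i) : ℚ) < c := by rw [hc]; linarith
  have hcd : c < d := by rw [hc]; linarith
  set f : Finset V → ℚ := fun A => ((innerEdges G A).card : ℚ) - c * (A.card : ℚ) with hf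
  obtain ⟨W, -, hWmax⟩ := Finset.exists_max_image (Finset.univ : Finset (Finset V))
    (fun A => toLex (f A, A.card)) ⟨∅, Finset.mem_univ ∅⟩
  have hW' : ∀ A : Finset V, toLex (f A, A.card) ≤ toLex (f W, W.card) :=
    fun A => hWmax A (Finset.mem_univ A)
  have P1 : ∀ A : Finset V, f A ≤ f W := by
    intro A
    have h := hW' A
    rw [Prod.Lex.le_iff] at h
    rcases h with h | ⟨h, -⟩
    · exact le_of_lt h
    · exact le_of_eq h
  have P2 : ∀ A : Finset V, f W ≤ f A → A.card ≤ W.card := by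
    intro A hA
    have h := hW' A
    rw [Prod.Lex.le_iff] at h
    rcases h with h | ⟨-, h⟩
    · exact absurd hA (not_le.mpr h)
    · exact h
  have hWld : LocallyDense G W := by
    rintro ⟨X, Y, hXne, hYne, hXW, hYW, hle⟩
    have hXpos : (0:ℚ) < (X.card : ℚ) := by exact_mod_cast Finset.card_pos.mpr hXne
    have hYpos : (0:ℚ) < (Y.card : ℚ) := by exact_mod_cast Finset.card_pos.mpr hYne
    have hYWd : Disjoint Y W := Finset.disjoint_iff_inter_eq_empty.mpr hYW
    have hsplit := innerEdges_split G W X hXW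
    have hXcard_le : X.card ≤ W.card := Finset.card_le_card hXW
    have hca : c * (X.card : ℚ) ≤ ((margEdges G X (W \ X)).card : ℚ) := by
      have h1 := P1 (W \ X)
      rw [hf] at h1
      simp only at h1
      have e1 : ((innerEdges G W).card : ℚ)
          = ((innerEdges G (W \ X)).card : ℚ) + ((margEdges G X (W \ X)).card : ℚ) := by
        exact_mod_cast hsplit
      have e2 : ((W \ X).card : ℚ) = (W.card : ℚ) - (X.card : ℚ) := by
        rw [Finset.card_sdiff_of_subset hXW]
        exact Nat.cast_sub hXcard_le
      rw [e2, mul_sub] at h1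
      linarith
    have hunion := innerEdges_union G W Y hYWd
    have hcardWY : (W ∪ Y).card = W.card + Y.card :=
      Finset.card_union_of_disjoint hYWd.symm
    have hcb : ((margEdges G Y W).card : ℚ) < c * (Y.card : ℚ) := by
      by_contra hb
      push_neg at hb
      have h1 : f W ≤ f (W ∪ Y) := by
        rw [hf]
        simp only
        have e1 : ((innerEdges G (W ∪ Y)).card : ℚ)
            = ((innerEdges G W).card : ℚ) + ((margEdges G Y W).card : ℚ) := by
          exact_mod_cast hunion
        have e2 : ((W ∪ Y).card : ℚ) = (W.card : ℚ) + (Y.card : ℚ) := by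
          exact_mod_cast hcardWY
        rw [e1, e2, mul_add]
        linarith
      have h2 := P2 _ h1
      rw [hcardWY] at h2
      have h3 := Finset.card_pos.mpr hYne
      omega
    have hXs : X \ (W \ X) = X :=
      Finset.sdiff_eq_self_iff_disjoint.mpr Finset.disjoint_sdiff
    have hYs : Y \ W = Y := Finset.sdiff_eq_self_iff_disjoint.mpr hYWd
    rw [outDensity, outDensity, hXs, hYs] at hle
    have hleft : c ≤ ((margEdges G X (W \ X)).card : ℚ) / (X.card : ℚ) :=
      (le_div_iff₀ hXpos).mpr (by linarith)
    have hright : ((margEdges G Y W).card : ℚ) / (Y.card : ℚ) < c :=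
      (div_lt_iff₀ hYpos).mpr hcb
    linarith
  obtain ⟨j, hjk, hWj⟩ := (hall W).mp hWld
  rw [hWj] at P1 P2
  rcases lt_or_ge j i with hji | hij
  · -- case j ≤ i - 1 : W ⊆ B (i-1)
    have hsub : B j ⊆ B (i-1) := by
      rcases eq_or_lt_of_le (by omega : j ≤ i - 1) with h | h
      · rw [h]
      · exact (hchain j (i-1) h (by omega)).subset
    by_cases hZ : B (i-1) \ B j = ∅
    · -- W = B (i-1)
      have hBj : B j = B (i-1) :=
        Finset.Subset.antisymm hsub (Finset.sdiff_eq_empty_iff_subset.mp hZ)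
      have h1 := P1 (B i)
      rw [hf, hBj] at h1
      simp only at h1
      have e1 : ((innerEdges G (B i)).card : ℚ)
          = ((innerEdges G (B (i-1))).card : ℚ) + ((margEdges G S (B (i-1))).card : ℚ) := by
        exact_mod_cast hsplitS
      have e2 : ((B i).card : ℚ) = ((B (i-1)).card : ℚ) + (S.card : ℚ) := by
        exact_mod_cast hcardS
      rw [e1, e2, mul_add] at h1
      have hlt2 : c * (S.card : ℚ) < d * (S.card : ℚ) :=
        mul_lt_mul_of_pos_right hcd hSpos
      rw [hdval] at hlt2
      linarith
    · -- B j ⊊ B (i-1) : use local density of B (i-1)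
      have hZne : (B (i-1) \ B j).Nonempty := Finset.nonempty_of_ne_empty hZ
      have hZpos : (0:ℚ) < ((B (i-1) \ B j).card : ℚ) := by
        exact_mod_cast Finset.card_pos.mpr hZne
      have hld1 : LocallyDense G (B (i-1)) := (hall (B (i-1))).mpr ⟨i-1, by omega, rfl⟩
      have hBB : B (i-1) \ (B (i-1) \ B j) = B j := Finset.sdiff_sdiff_eq_self hsub
      have hnot : ¬ (outDensity G (B (i-1) \ B j) (B (i-1) \ (B (i-1) \ B j))
          ≤ outDensity G S (B (i-1))) := fun h =>
        hld1 ⟨B (i-1) \ B j, S, hZne, hSne, Finset.sdiff_subset,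
          Finset.sdiff_inter_self _ _, h⟩
      rw [hBB] at hnot
      have hSd2 : S \ B (i-1) = S := Finset.sdiff_eq_self_iff_disjoint.mpr hSd
      have hdS : outDensity G S (B (i-1)) = d := by
        rw [outDensity, hSd2, hd, outDensity, ← hS]
      rw [hdS] at hnot
      have hlt : d < outDensity G (B (i-1) \ B j) (B j) := not_le.mp hnot
      have hZd : (B (i-1) \ B j) \ B j = B (i-1) \ B j :=
        Finset.sdiff_eq_self_iff_disjoint.mpr Finset.sdiff_disjoint
      rw [outDensity, hZd] at hlt
      rw [lt_div_iff₀ hZpos] at hlt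
      have hsplitZ : (innerEdges G (B (i-1))).card
          = (innerEdges G (B j)).card + (margEdges G (B (i-1) \ B j) (B j)).card := by
        have h := innerEdges_split G (B (i-1)) (B (i-1) \ B j) Finset.sdiff_subset
        rwa [hBB] at h
      have h1 := P1 (B (i-1))
      rw [hf] at h1
      simp only at h1
      have e1 : ((innerEdges G (B (i-1))).card : ℚ)
          = ((innerEdges G (B j)).card : ℚ)
            + ((margEdges G (B (i-1) \ B j) (B j)).card : ℚ) := by
        exact_mod_cast hsplitZ
      have e2 : ((B (i-1)).card : ℚ) = ((B j).card : ℚ) + ((B (i-1) \ B j).card : ℚ) := by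
        have h3 := Finset.card_sdiff_of_subset hsub
        have h4 := Finset.card_le_card hsub
        have : (B (i-1)).card = (B j).card + (B (i-1) \ B j).card := by omega
        exact_mod_cast this
      rw [e1, e2, mul_add] at h1
      have hlt3 := mul_lt_mul_of_pos_right hcd hZpos
      linarith
  · -- case i ≤ j : B i ⊆ W
    have hsub : B i ⊆ B j := by
      rcases eq_or_lt_of_le hij with h | h
      · rw [h]
      · exact (hchain i j h hjk).subset
    have hvBi : v ∈ B i := (Finset.mem_sdiff.mp hv).1
    by_cases hY : B j \ B i = ∅
    · -- W = B i : remove v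
      have hBj : B j = B i :=
        Finset.Subset.antisymm (Finset.sdiff_eq_empty_iff_subset.mp hY) hsub
      have hvsub : {v} ⊆ B i := Finset.singleton_subset_iff.mpr hvBi
      have hsplitv := innerEdges_split G (B i) {v} hvsub
      rw [margEdges_singleton_degIn G v (B i) hvBi] at hsplitv
      have h1 := P1 (B i \ {v})
      rw [hf, hBj] at h1
      simp only at h1
      have hvcard_le : ({v} : Finset V).card ≤ (B i).card := Finset.card_le_card hvsub
      have e1 : ((innerEdges G (B i)).card : ℚ)
          = ((innerEdges G (B i \ {v})).card : ℚ) + (degIn G v (B i) : ℚ) := by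
        exact_mod_cast hsplitv
      have e2 : ((B i \ {v}).card : ℚ) = ((B i).card : ℚ) - 1 := by
        have h3 := Finset.card_sdiff_of_subset hvsub
        simp only [Finset.card_singleton] at h3 hvcard_le
        rw [h3]
        push_cast [Nat.cast_sub hvcard_le]
        ring
      rw [e1, e2, mul_sub, mul_one] at h1
      linarith
    · -- B i ⊊ B j : use local density of B i
      have hYne : (B j \ B i).Nonempty := Finset.nonempty_of_ne_empty hY
      have hYpos : (0:ℚ) < ((B j \ B i).card : ℚ) := by
        exact_mod_cast Finset.card_pos.mpr hYne
      have hldBi : LocallyDense G (B i) := (hall (B i)).mpr ⟨i, hik, rfl⟩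
      have hnot : ¬ (outDensity G {v} (B i \ {v}) ≤ outDensity G (B j \ B i) (B i)) :=
        fun h => hldBi ⟨{v}, B j \ B i, Finset.singleton_nonempty v, hYne,
          Finset.singleton_subset_iff.mpr hvBi, Finset.sdiff_inter_self _ _, h⟩
      have hlt : outDensity G (B j \ B i) (B i) < outDensity G {v} (B i \ {v}) :=
        not_le.mp hnot
      have hvd : ({v} : Finset V) \ (B i \ {v}) = {v} :=
        Finset.sdiff_eq_self_iff_disjoint.mpr Finset.disjoint_sdiff
      have hdeg1 : outDensity G {v} (B i \ {v}) = (degIn G v (B i) : ℚ) := by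
        rw [outDensity, hvd, margEdges_singleton_degIn G v (B i) hvBi]
        simp
      have hYd : (B j \ B i) \ B i = B j \ B i :=
        Finset.sdiff_eq_self_iff_disjoint.mpr Finset.sdiff_disjoint
      rw [hdeg1, outDensity, hYd] at hlt
      rw [div_lt_iff₀ hYpos] at hlt
      have hsplitY : (innerEdges G (B j)).card
          = (innerEdges G (B i)).card + (margEdges G (B j \ B i) (B i)).card := by
        have h := innerEdges_split G (B j) (B j \ B i) Finset.sdiff_subset
        rw [Finset.sdiff_sdiff_eq_self hsub] at h
        exact h
      have h1 := P1 (B i)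
      rw [hf] at h1
      simp only at h1
      have e1 : ((innerEdges G (B j)).card : ℚ)
          = ((innerEdges G (B i)).card : ℚ) + ((margEdges G (B j \ B i) (B i)).card : ℚ) := by
        exact_mod_cast hsplitY
      have e2 : ((B j).card : ℚ) = ((B i).card : ℚ) + ((B j \ B i).card : ℚ) := by
        have h3 := Finset.card_sdiff_of_subset hsub
        have h4 := Finset.card_le_card hsub
        have : (B j).card = (B i).card + (B j \ B i).card := by omega
        exact_mod_cast this
      rw [e1, e2, mul_add] at h1
      have hlt3 := mul_lt_mul_of_pos_right hdegc hYpos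
      linarith
end

section
/- Additivity of outer density across a partition: let U be a vertex set, X ⊆ U, and suppose X is partitioned into nonempty parts X_1,…,X_m with associated sets U_1,…,U_m such that for each j, U_j\X_j ⊆ U\X together with the part structure used in the proof of Proposition 3 (X_j = X ∩ (B_j\B_{j−1}), U_j = (U\X) ∪ B_{j−1}). Then d(X, U\X) ≥ Σ_j (|X_j|/|X|) · d(X_j, U_j\X_j); in particular if each d(X_j, U_j\X_j) ≥ c, then d(X, U\X) ≥ c. -/
open Finset

variable {V : Type*}

theorem outer_density_partition_additivity [Fintype V] [DecidableEq V] (G : SimpleGraph V) [DecidableRel G.Adj]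
    (U X : Finset V) (hXU : X ⊆ U) (m : ℕ) (B : ℕ → Finset V)
    (hBmono : ∀ j, j < m → B j ⊆ B (j + 1)) (hBU : ∀ j, j ≤ m → B j ⊆ U)
    (hB0 : Disjoint X (B 0)) (hXm : X ⊆ B m) (hX : X.Nonempty)
    (hne : ∀ j, 1 ≤ j → j ≤ m → (X ∩ (B j \ B (j - 1))).Nonempty) :
    (∑ j ∈ Finset.Icc 1 m,
        ((X ∩ (B j \ B (j - 1))).card : ℚ) / (X.card : ℚ) *
          outDensity G (X ∩ (B j \ B (j - 1)))
            (((U \ X) ∪ B (j - 1)) \ (X ∩ (B j \ B (j - 1)))))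
      ≤ outDensity G X (U \ X) ∧
    ∀ c : ℚ,
      (∀ j, 1 ≤ j → j ≤ m →
        c ≤ outDensity G (X ∩ (B j \ B (j - 1)))
              (((U \ X) ∪ B (j - 1)) \ (X ∩ (B j \ B (j - 1))))) →
      c ≤ outDensity G X (U \ X) := by
  classical
  set Xj : ℕ → Finset V := fun j => X ∩ (B j \ B (j - 1)) with hXjdef
  set Yj : ℕ → Finset V := fun j => ((U \ X) ∪ B (j - 1)) \ Xj j with hYjdef
  -- monotonicity of B up to m
  have hBsub : ∀ j k, j ≤ k → k ≤ m → B j ⊆ B k := by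
    intro j k hjk hkm
    induction k with
    | zero => have : j = 0 := Nat.le_zero.mp hjk; simp [this]
    | succ k ih =>
      rcases Nat.lt_or_ge j (k + 1) with h | h
      · exact (ih (by omega) (by omega)).trans (hBmono k (by omega))
      · have : j = k + 1 := by omega
        simp [this]
  -- Xj are pairwise disjoint
  have hdisjX : ∀ j ∈ Icc 1 m, ∀ k ∈ Icc 1 m, j ≠ k → Disjoint (Xj j) (Xj k) := by
    have key : ∀ j k, j ∈ Icc 1 m → k ∈ Icc 1 m → j < k → Disjoint (Xj j) (Xj k) := by
      intro j k hj hk hjk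
      simp only [mem_Icc] at hj hk
      refine Finset.disjoint_left.mpr ?_
      intro x hx hx'
      simp only [hXjdef, mem_inter, mem_sdiff] at hx hx'
      exact hx'.2.2 (hBsub j (k - 1) (by omega) (by omega) hx.2.1)
    intro j hj k hk hjk
    rcases Nat.lt_or_ge j k with h | h
    · exact key j k hj hk h
    · exact (key k j hk hj (by omega)).symm
  -- Xj cover X
  have hcover : X = (Icc 1 m).biUnion Xj := by
    ext x
    simp only [mem_biUnion, mem_Icc, hXjdef, mem_inter, mem_sdiff]
    constructor
    · intro hx
      have hex : ∃ j, x ∈ B j := ⟨m, hXm hx⟩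
      have hxj : x ∈ B (Nat.find hex) := Nat.find_spec hex
      have hj1 : 1 ≤ Nat.find hex := by
        rcases Nat.eq_zero_or_pos (Nat.find hex) with h | h
        · exact absurd (h ▸ hxj) (fun hc => (Finset.disjoint_left.mp hB0) hx hc)
        · exact h
      have hjm : Nat.find hex ≤ m := Nat.find_le (hXm hx)
      exact ⟨Nat.find hex, ⟨hj1, hjm⟩, hx, hxj, Nat.find_min hex (by omega)⟩
    · rintro ⟨j, _, hx, _⟩; exact hx
  have hcardsum : ∑ j ∈ Icc 1 m, (Xj j).card = X.card := by
    rw [hcover]; exact (Finset.card_biUnion hdisjX).symm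
  -- set differences simplify
  have hXsd : X \ (U \ X) = X := by
    ext x; simp only [mem_sdiff]; tauto
  have hXjsd : ∀ j, Xj j \ Yj j = Xj j := by
    intro j; ext x; simp only [hYjdef, mem_sdiff]; tauto
  -- edge sets
  set Ej : ℕ → Finset (Sym2 V) := fun j => margEdges G (Xj j) (Yj j) with hEjdef
  set E : Finset (Sym2 V) := margEdges G X (U \ X) with hEdef
  -- each Ej is a subset of E
  have hEsub : ∀ j ∈ Icc 1 m, Ej j ⊆ E := by
    intro j hj
    simp only [mem_Icc] at hj
    intro e he
    simp only [hEjdef, hEdef, margEdges, mem_filter] at he ⊢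
    obtain ⟨heG, hall, v, hv, hvX⟩ := he
    refine ⟨heG, ?_, v, hv, (Finset.inter_subset_left hvX : v ∈ X)⟩
    intro w hw
    have := hall w hw
    simp only [mem_union, hYjdef, hXjdef, mem_sdiff, mem_inter] at this ⊢
    rcases this with h | ⟨h, _⟩
    · exact Or.inl h.1
    · rcases h with h | h
      · exact Or.inr h
      · have hwU : w ∈ U := hBU (j - 1) (by omega) h
        by_cases hwX : w ∈ X
        · exact Or.inl hwX
        · exact Or.inr ⟨hwU, hwX⟩
  -- Ej pairwise disjoint
  have hEdisj : ∀ j ∈ Icc 1 m, ∀ k ∈ Icc 1 m, j ≠ k → Disjoint (Ej j) (Ej k) := by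
    have key : ∀ j k, j ∈ Icc 1 m → k ∈ Icc 1 m → j < k → Disjoint (Ej j) (Ej k) := by
      intro j k hj hk hjk
      simp only [mem_Icc] at hj hk
      refine Finset.disjoint_left.mpr ?_
      intro e he he'
      simp only [hEjdef, margEdges, mem_filter] at he he'
      obtain ⟨_, hall, _⟩ := he
      obtain ⟨_, _, v, hv, hvXk⟩ := he'
      have hvmem := hall v hv
      simp only [mem_union, hYjdef, hXjdef, mem_sdiff, mem_inter] at hvmem hvXk
      obtain ⟨hvX, hvBk, hvnBk⟩ := hvXk
      rcases hvmem with h | ⟨h, _⟩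
      · exact hvnBk (hBsub j (k - 1) (by omega) (by omega) h.2.1)
      · rcases h with h | h
        · exact h.2 hvX
        · exact hvnBk (hBsub (j - 1) (k - 1) (by omega) (by omega) h)
    intro j hj k hk hjk
    rcases Nat.lt_or_ge j k with h | h
    · exact key j k hj hk h
    · exact (key k j hk hj (by omega)).symm
  -- edge counting
  have hEcount : ∑ j ∈ Icc 1 m, ((Ej j).card : ℚ) ≤ (E.card : ℚ) := by
    have h1 : ((Icc 1 m).biUnion Ej).card = ∑ j ∈ Icc 1 m, (Ej j).card :=
      Finset.card_biUnion hEdisj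
    have h2 : (Icc 1 m).biUnion Ej ⊆ E :=
      Finset.biUnion_subset.mpr hEsub
    have := Finset.card_le_card h2
    rw [h1] at this
    exact_mod_cast this
  have hXpos : (0 : ℚ) < (X.card : ℚ) := by
    exact_mod_cast Finset.card_pos.mpr hX
  -- rewrite the summand
  have hterm : ∀ j ∈ Icc 1 m,
      ((Xj j).card : ℚ) / (X.card : ℚ) * outDensity G (Xj j) (Yj j)
        = ((Ej j).card : ℚ) / (X.card : ℚ) := by
    intro j hj
    simp only [mem_Icc] at hj
    have hXjpos : (0 : ℚ) < ((Xj j).card : ℚ) := by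
      exact_mod_cast Finset.card_pos.mpr (hne j hj.1 hj.2)
    rw [outDensity, hXjsd j]
    rw [div_mul_div_comm, mul_comm ((Xj j).card : ℚ), mul_div_mul_right _ _ (ne_of_gt hXjpos)]
  have hsum1 : ∑ j ∈ Icc 1 m,
      ((Xj j).card : ℚ) / (X.card : ℚ) * outDensity G (Xj j) (Yj j)
        ≤ outDensity G X (U \ X) := by
    rw [Finset.sum_congr rfl hterm, ← Finset.sum_div]
    rw [outDensity, hXsd, ← hEdef]
    exact div_le_div_of_nonneg_right hEcount hXpos.le
  constructor
  · exact hsum1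
  · intro c hc
    have hfrac : ∑ j ∈ Icc 1 m, ((Xj j).card : ℚ) / (X.card : ℚ) = 1 := by
      rw [← Finset.sum_div]
      rw [show ∑ j ∈ Icc 1 m, ((Xj j).card : ℚ) = (X.card : ℚ) by exact_mod_cast hcardsum]
      exact div_self (ne_of_gt hXpos)
    calc c = ∑ j ∈ Icc 1 m, ((Xj j).card : ℚ) / (X.card : ℚ) * c := by
            rw [← Finset.sum_mul, hfrac, one_mul]
      _ ≤ ∑ j ∈ Icc 1 m,
            ((Xj j).card : ℚ) / (X.card : ℚ) * outDensity G (Xj j) (Yj j) := by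
            refine Finset.sum_le_sum ?_
            intro j hj
            simp only [mem_Icc] at hj
            exact mul_le_mul_of_nonneg_left (hc j hj.1 hj.2)
              (div_nonneg (Nat.cast_nonneg _) (le_of_lt hXpos))
      _ ≤ outDensity G X (U \ X) := hsum1
end
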